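/- arXiv:0906.4332 — 2 statements merged into one kernel-verified Lean document; each statement's English description precedes it below -/
import Mathlib

section
/- If a family of update functions Upd satisfies P1 and P2 and the singleton condition P6' (|Upd(Pr,B)| ≤ 1 for all Pr, B), then it satisfies the bounded-amplification condition P6'': for each measure space M and probability measure Pr, there exists a constant c such that Pr'(A) ≤ c·Pr(A|B) for all events A, B with Pr(B)>0 and all Pr' ∈ Upd(Pr,B). -/
open MeasureTheory ProbabilityTheory Set
open scoped Classical NNReal ENNReal

noncomputable section

/-- A family of update functions, one for each measure space. -/
abbrev UpdFamily : Type 1 :=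
  ∀ (W : Type) [MeasurableSpace W],
    Set (ProbabilityMeasure W) → Set W → Set (ProbabilityMeasure W)

/-- Base condition: `Upd(X,B) = ∅` whenever every measure in `X` gives `B` probability 0. -/
def UpdBase (U : UpdFamily) : Prop :=
  ∀ (W : Type) [MeasurableSpace W] (X : Set (ProbabilityMeasure W)) (B : Set W),
    (∀ μ ∈ X, μ B = 0) → U W X B = ∅

/-- The conditional probability `Pr(A|B) = Pr(A ∩ B)/Pr(B)`. -/
def condProb {W : Type} [MeasurableSpace W] (μ : ProbabilityMeasure W) (A B : Set W) : ℝ≥0 :=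
  μ (A ∩ B) / μ B

/-- The conditional probability measure `Pr(·|B)` (defined when `Pr(B) > 0`). -/
def condPM {W : Type} [MeasurableSpace W] (μ : ProbabilityMeasure W) (B : Set W) :
    ProbabilityMeasure W :=
  if h : (μ : Measure W) B ≠ 0 then
    ⟨(μ : Measure W)[|B], cond_isProbabilityMeasure h⟩
  else μ

/-- Pushforward of a probability measure along a measurable map (`f*`). -/
def pushPM {W W' : Type} [MeasurableSpace W] [MeasurableSpace W']
    {f : W → W'} (hf : Measurable f) (μ : ProbabilityMeasure W) : ProbabilityMeasure W' :=
  μ.map hf.aemeasurable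

/-- P1: every measure in `Upd(X,B)` assigns probability 1 to `B`. -/
def P1 (U : UpdFamily) : Prop :=
  ∀ (W : Type) [MeasurableSpace W] (X : Set (ProbabilityMeasure W)) (B : Set W),
    MeasurableSet B → ∀ μ ∈ U W X B, μ B = 1

/-- P2: representation independence under measurable surjections. -/
def P2 (U : UpdFamily) : Prop :=
  ∀ (W W' : Type) [MeasurableSpace W] [MeasurableSpace W'] (f : W → W')
    (hf : Measurable f), Function.Surjective f →
    ∀ (X : Set (ProbabilityMeasure W)) (B : Set W'), MeasurableSet B →
      U W' (pushPM hf '' X) B = pushPM hf '' (U W X (f ⁻¹' B))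

/-- P3: compositionality of updating. -/
def P3 (U : UpdFamily) : Prop :=
  ∀ (W : Type) [MeasurableSpace W] (X : Set (ProbabilityMeasure W)) (B C : Set W),
    MeasurableSet B → MeasurableSet C → U W (U W X B) C = U W X (B ∩ C)

/-- P4: trivial update on sure evidence. -/
def P4 (U : UpdFamily) : Prop :=
  ∀ (W : Type) [MeasurableSpace W] (X : Set (ProbabilityMeasure W)) (B : Set W),
    MeasurableSet B → (∀ μ ∈ X, μ B = 1) → U W X B = X

/-- P5: pointwise union decomposition. -/
def P5 (U : UpdFamily) : Prop :=
  ∀ (W : Type) [MeasurableSpace W] (X : Set (ProbabilityMeasure W)) (B : Set W),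
    MeasurableSet B → U W X B = ⋃ μ ∈ X, U W {μ} B

/-- P6': singleton inputs yield at most one output measure. -/
def P6' (U : UpdFamily) : Prop :=
  ∀ (W : Type) [MeasurableSpace W] (μ : ProbabilityMeasure W) (B : Set W),
    MeasurableSet B → (U W {μ} B).Subsingleton

/-- P6'': bounded amplification relative to conditioning. -/
def P6'' (U : UpdFamily) : Prop :=
  ∀ (W : Type) [MeasurableSpace W] (μ : ProbabilityMeasure W), ∃ c : ℝ≥0,
    ∀ (A B : Set W), MeasurableSet A → MeasurableSet B →
      ∀ ν ∈ U W {μ} B, ν A ≤ c * condProb μ A B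

/-- P6: either P6' or P6'' holds. -/
def P6 (U : UpdFamily) : Prop := P6' U ∨ P6'' U

/-- P7: some non-sure evidence yields a nonempty update. -/
def P7 (U : UpdFamily) : Prop :=
  ∃ (W : Type) (_ : MeasurableSpace W) (X : Set (ProbabilityMeasure W)) (B : Set W),
    MeasurableSet B ∧ (∀ μ ∈ X, μ B ≠ 1) ∧ U W X B ≠ ∅

/-- Conditioning: `Upd_cond(X,B) = {Pr(·|B) : Pr ∈ X, Pr(B) > 0}`. -/
def updCond {W : Type} [MeasurableSpace W] (X : Set (ProbabilityMeasure W)) (B : Set W) :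
    Set (ProbabilityMeasure W) :=
  {ν | ∃ μ ∈ X, 0 < μ B ∧ ν = condPM μ B}

/-- Constraining: `Upd_constrain(X,B) = {Pr ∈ X : Pr(B) = 1}`. -/
def updConstrain {W : Type} [MeasurableSpace W] (X : Set (ProbabilityMeasure W)) (B : Set W) :
    Set (ProbabilityMeasure W) := {μ ∈ X | μ B = 1}

end


noncomputable section Aux
set_option linter.unusedSectionVars false
set_option linter.unusedVariables false

def mu0 : Measure ℝ := volume.restrict (Icc 0 1)
instance : IsProbabilityMeasure mu0 := ⟨by simp [mu0, Real.volume_Icc]⟩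
def muP : ProbabilityMeasure ℝ := ⟨mu0, inferInstance⟩
lemma mu0_apply (s : Set ℝ) : mu0 s = volume (s ∩ Icc 0 1) :=
  Measure.restrict_apply' measurableSet_Icc
lemma mu0_Iio {x : ℝ} (hx : x ≤ 1) : mu0 (Iio x) = ENNReal.ofReal x := by
  rw [mu0_apply]
  rcases le_or_gt 0 x with h | h
  · rw [show Iio x ∩ Icc 0 1 = Ico 0 x by
      ext y; simp only [mem_inter_iff, mem_Iio, mem_Icc, mem_Ico]
      constructor
      · rintro ⟨h1, h2, h3⟩; exact ⟨h2, h1⟩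
      · rintro ⟨h1, h2⟩; exact ⟨h2, h1, by linarith⟩, Real.volume_Ico, sub_zero]
  · rw [show Iio x ∩ Icc 0 1 = ∅ by
      ext y; simp only [mem_inter_iff, mem_Iio, mem_Icc, mem_empty_iff_false, iff_false]
      rintro ⟨h1, h2, h3⟩; linarith]
    rw [measure_empty, ENNReal.ofReal_eq_zero.mpr h.le]
lemma mu0_Ico {x y : ℝ} (hx : 0 ≤ x) (hy : y ≤ 1) : mu0 (Ico x y) = ENNReal.ofReal (y - x) := by
  rw [mu0_apply]
  rcases le_or_gt y x with h | h
  · rw [Ico_eq_empty (by exact fun hlt => absurd h (not_le.mpr hlt)), empty_inter, measure_empty,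
      ENNReal.ofReal_eq_zero.mpr (by linarith)]
  · rw [inter_eq_self_of_subset_left (by
      intro z hz
      rw [mem_Ico] at hz
      exact mem_Icc.mpr ⟨le_trans hx hz.1, by linarith [hz.2]⟩), Real.volume_Ico]
lemma mu0_singleton (x : ℝ) : mu0 {x} = 0 := by
  rw [mu0_apply]
  exact measure_mono_null inter_subset_left Real.volume_singleton
lemma mu0_union_null {s t : Set ℝ} (ht : mu0 t = 0) : mu0 (s ∪ t) = mu0 s :=
  le_antisymm (le_trans (measure_union_le s t) (by rw [ht, add_zero]))
    (measure_mono subset_union_left)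

lemma rho_bound (ρ : ProbabilityMeasure ℝ) (E : Set ℝ) (b : ℝ)
    (hb0 : 0 < b) (hb1 : b ≤ 1)
    (hIio : Iio b ⊆ E) (hEmeas : MeasurableSet E)
    (hrest0 : mu0 (E \ Iio b) = 0) (hrestne : (E \ Iio b).Nonempty)
    (hρE : (ρ : Measure ℝ) E = 1)
    (hsame : ∀ A' A'' : Set ℝ, MeasurableSet A' → MeasurableSet A'' → A' ⊆ E → A'' ⊆ E →
      A'.Nonempty → A''.Nonempty → (E \ A').Nonempty → (E \ A'').Nonempty →
      mu0 A' = mu0 A'' → (ρ : Measure ℝ) A' = (ρ : Measure ℝ) A'') :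
    ∀ A' : Set ℝ, MeasurableSet A' → A' ⊆ E → A'.Nonempty → (E \ A').Nonempty →
      (ρ : Measure ℝ) A' ≤ ENNReal.ofReal ((mu0 A').toReal / b) := by
  have hEb : mu0 E = ENNReal.ofReal b := by
    rw [← union_diff_cancel hIio, mu0_union_null hrest0, mu0_Iio hb1]
  have hIioE : ∀ {x : ℝ}, x ≤ b → Iio x ⊆ E := fun hx =>
    subset_trans (Iio_subset_Iio hx) hIio
  have hcne : ∀ {x : ℝ}, x ≤ b → (E \ Iio x).Nonempty := fun hx =>
    hrestne.mono (diff_subset_diff_right (Iio_subset_Iio hx))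
  -- ρ (Iio 0) = 0
  have G0 : (ρ : Measure ℝ) (Iio 0) = 0 := by
    have e1 : (ρ : Measure ℝ) (Iio (-1)) = (ρ : Measure ℝ) (Iio 0) :=
      hsame _ _ measurableSet_Iio measurableSet_Iio (hIioE (by linarith)) (hIioE hb0.le)
        nonempty_Iio nonempty_Iio (hcne (by linarith)) (hcne hb0.le)
        (by rw [mu0_Iio (by linarith), mu0_Iio (by linarith)]; norm_num)
    have e2 : (ρ : Measure ℝ) (Ico (-1) 0) = (ρ : Measure ℝ) (Iio 0) := by
      refine hsame _ _ measurableSet_Ico measurableSet_Iio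
        (subset_trans Ico_subset_Iio_self (hIioE hb0.le)) (hIioE hb0.le)
        ⟨-1, by norm_num⟩ nonempty_Iio
        (hrestne.mono (diff_subset_diff_right (subset_trans Ico_subset_Iio_self
          (Iio_subset_Iio hb0.le)))) (hcne hb0.le) ?_
      rw [measure_mono_null (show Ico (-1:ℝ) 0 ⊆ Iio 0 from Ico_subset_Iio_self)
        (by rw [mu0_Iio (by linarith)]; norm_num), mu0_Iio (by linarith)]
      norm_num
    have e3 : (ρ : Measure ℝ) (Iio 0) =
        (ρ : Measure ℝ) (Iio (-1)) + (ρ : Measure ℝ) (Ico (-1) 0) := by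
      rw [← measure_union ((Iio_disjoint_Ici le_rfl).mono_right Ico_subset_Ici_self)
        measurableSet_Ico, Iio_union_Ico_eq_Iio (by norm_num : (-1:ℝ) ≤ 0)]
    rw [e1, e2] at e3
    have hfin : (ρ : Measure ℝ) (Iio 0) ≠ ∞ := measure_ne_top _ _
    have : (ρ : Measure ℝ) (Iio 0) + 0 = (ρ : Measure ℝ) (Iio 0) + (ρ : Measure ℝ) (Iio 0) := by
      rw [add_zero]; exact e3
    exact ((ENNReal.add_right_inj hfin).mp this).symm
  -- splitting
  have hsplit : ∀ x y : ℝ, 0 ≤ x → x < y → y ≤ b →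
      (ρ : Measure ℝ) (Iio y) = (ρ : Measure ℝ) (Iio x) + (ρ : Measure ℝ) (Iio (y - x)) := by
    intro x y hx hxy hyb
    have hico : (ρ : Measure ℝ) (Ico x y) = (ρ : Measure ℝ) (Iio (y - x)) := by
      refine hsame _ _ measurableSet_Ico measurableSet_Iio
        (subset_trans Ico_subset_Iio_self (hIioE hyb)) (hIioE (by linarith)) ⟨x, by
          simp [hxy]⟩ nonempty_Iio
        (hrestne.mono (diff_subset_diff_right (subset_trans Ico_subset_Iio_self
          (Iio_subset_Iio hyb)))) (hcne (by linarith)) ?_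
      rw [mu0_Ico hx (le_trans hyb hb1), mu0_Iio (by linarith)]
    rw [← hico, ← measure_union ((Iio_disjoint_Ici le_rfl).mono_right Ico_subset_Ici_self)
      measurableSet_Ico, Iio_union_Ico_eq_Iio hxy.le]
  -- scaling
  have hmul : ∀ n : ℕ, 0 < n → ∀ k : ℕ, k ≤ n →
      (ρ : Measure ℝ) (Iio ((k : ℝ) * (b / n))) = (k : ℕ) * (ρ : Measure ℝ) (Iio (b / n)) := by
    intro n hn
    intro k
    induction k with
    | zero => intro _; simp [G0]
    | succ k ih =>
      intro hk
      have hbn : (0:ℝ) < b / n := by positivity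
      have hy : ((k+1 : ℕ) : ℝ) * (b / n) ≤ b := by
        have h1 : ((k+1 : ℕ) : ℝ) ≤ (n : ℝ) := by exact_mod_cast hk
        calc ((k+1 : ℕ) : ℝ) * (b / n) ≤ (n : ℝ) * (b / n) :=
              mul_le_mul_of_nonneg_right h1 hbn.le
          _ = b := by field_simp
      have := hsplit ((k:ℝ) * (b / n)) (((k+1:ℕ) : ℝ) * (b / n))
        (by positivity) (by push_cast; nlinarith) hy
      rw [show ((k+1:ℕ):ℝ) * (b / n) - (k:ℝ) * (b / n) = b / n by push_cast; ring] at this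
      rw [this, ih (le_trans (Nat.le_succ k) hk)]
      push_cast
      ring
  -- total mass of Iio b
  have hone : (ρ : Measure ℝ) (Iio b) = 1 := by
    have hrest : (ρ : Measure ℝ) (E \ Iio b) = 0 := by
      have := hsame (E \ Iio b) (Iio 0) (hEmeas.diff measurableSet_Iio) measurableSet_Iio
        diff_subset (hIioE hb0.le) hrestne nonempty_Iio
        (by rw [diff_diff_right_self, inter_eq_self_of_subset_right hIio]; exact nonempty_Iio)
        (hcne hb0.le)
        (by rw [hrest0, mu0_Iio (by linarith)]; norm_num)
      rw [this, G0]
    have : (ρ : Measure ℝ) E = (ρ : Measure ℝ) (Iio b) + (ρ : Measure ℝ) (E \ Iio b) := by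
      rw [← measure_union disjoint_sdiff_right (hEmeas.diff measurableSet_Iio),
        union_diff_cancel hIio]
    rw [hρE, hrest, add_zero] at this
    exact this.symm
  -- main bound
  intro A' hA'meas hA'E hA'ne hA'cne
  set x := (mu0 A').toReal with hx_def
  have hfinA : mu0 A' ≠ ∞ := measure_ne_top _ _
  have hx0 : 0 ≤ x := ENNReal.toReal_nonneg
  have hxb : x ≤ b := by
    have h1 : mu0 A' ≤ mu0 E := measure_mono hA'E
    have := ENNReal.toReal_mono (by simp) (h1.trans_eq hEb)
    rwa [ENNReal.toReal_ofReal hb0.le] at this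
  have hA'eq : (ρ : Measure ℝ) A' = (ρ : Measure ℝ) (Iio x) :=
    hsame _ _ hA'meas measurableSet_Iio hA'E (hIioE hxb) hA'ne nonempty_Iio hA'cne (hcne hxb)
      (by rw [mu0_Iio (le_trans hxb hb1), hx_def, ENNReal.ofReal_toReal hfinA])
  rw [hA'eq]
  apply ENNReal.le_of_forall_pos_le_add
  intro ε hε _
  obtain ⟨n, hn⟩ := exists_nat_one_div_lt (show (0:ℝ) < (ε:ℝ) from hε)
  set m : ℕ := n + 1 with hm_def
  have hm0 : 0 < m := Nat.succ_pos n
  have hm0' : (0:ℝ) < m := by exact_mod_cast hm0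
  set k : ℕ := ⌈x * m / b⌉₊ with hk_def
  have hk1 : x ≤ (k : ℝ) * (b / m) := by
    have h := Nat.le_ceil (x * m / b)
    rw [div_le_iff₀ hb0] at h
    rw [mul_div_assoc', le_div_iff₀ hm0']
    linarith
  have hk2 : k ≤ m := by
    have : x * m / b ≤ (m : ℝ) := by
      rw [div_le_iff₀ hb0]
      nlinarith
    calc k ≤ ⌈(m:ℝ)⌉₊ := Nat.ceil_le_ceil this
    _ = m := Nat.ceil_natCast m
  have step1 : (ρ : Measure ℝ) (Iio x) ≤ (k : ℝ≥0∞) * (ρ : Measure ℝ) (Iio (b / m)) := by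
    rw [← hmul m hm0 k hk2]
    exact measure_mono (Iio_subset_Iio hk1)
  have step2 : (ρ : Measure ℝ) (Iio (b / m)) ≤ (m : ℝ≥0∞)⁻¹ := by
    rw [ENNReal.le_inv_iff_mul_le, mul_comm]
    have := hmul m hm0 m le_rfl
    rw [show ((m:ℕ):ℝ) * (b / m) = b by field_simp] at this
    rw [← this, hone]
  have step3 : (k : ℝ≥0∞) * (m : ℝ≥0∞)⁻¹ ≤ ENNReal.ofReal (x / b) + (ε : ℝ≥0∞) := by
    have hkm : (k : ℝ≥0∞) * (m : ℝ≥0∞)⁻¹ = ENNReal.ofReal ((k : ℝ) / m) := by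
      rw [ENNReal.ofReal_div_of_pos hm0', ENNReal.ofReal_natCast, ENNReal.ofReal_natCast,
        div_eq_mul_inv]
    rw [hkm]
    have hkr : (k : ℝ) / m ≤ x / b + 1 / m := by
      have h := Nat.ceil_lt_add_one (show (0:ℝ) ≤ x * m / b by positivity)
      rw [← hk_def] at h
      rw [div_le_iff₀ hm0', add_mul]
      have e2 : (x / b) * m = x * m / b := by ring
      rw [e2, one_div, inv_mul_cancel₀ (ne_of_gt hm0')]
      exact h.le
    calc ENNReal.ofReal ((k:ℝ)/m) ≤ ENNReal.ofReal (x / b + 1 / m) :=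
          ENNReal.ofReal_le_ofReal hkr
      _ ≤ ENNReal.ofReal (x / b) + ENNReal.ofReal (1 / m) := ENNReal.ofReal_add_le
      _ ≤ ENNReal.ofReal (x / b) + (ε : ℝ≥0∞) := by
          apply add_le_add_right
          apply le_trans (ENNReal.ofReal_le_ofReal (le_of_lt (by simp only [hm_def]; push_cast; exact hn)))
          rw [ENNReal.ofReal_coe_nnreal]
    
  calc (ρ : Measure ℝ) (Iio x) ≤ (k : ℝ≥0∞) * (ρ : Measure ℝ) (Iio (b / m)) := step1
    _ ≤ (k : ℝ≥0∞) * (m : ℝ≥0∞)⁻¹ := mul_le_mul_right step2 _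
    _ ≤ ENNReal.ofReal (x / b) + (ε : ℝ≥0∞) := step3

lemma pushPM_apply {W W' : Type} [MeasurableSpace W] [MeasurableSpace W']
    {f : W → W'} (hf : Measurable f) (μ : ProbabilityMeasure W) {s : Set W'}
    (hs : MeasurableSet s) :
    (pushPM hf μ : Measure W') s = (μ : Measure W) (f ⁻¹' s) := by
  rw [pushPM, ProbabilityMeasure.toMeasure_map, Measure.map_apply hf hs]


-- collapse machinery
section Collapse
variable {W : Type} [MeasurableSpace W]

def collapse (A B : Set W) (w : W) : Fin 3 :=
  if w ∈ A then 0 else if w ∈ B then 1 else 2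

variable {A B : Set W}

lemma collapse_pre0 : collapse A B ⁻¹' {0} = A := by
  ext w; simp only [collapse, mem_preimage, mem_singleton_iff]
  by_cases hA : w ∈ A <;> by_cases hB : w ∈ B <;> simp [hA, hB]

lemma collapse_pre1 : collapse A B ⁻¹' {1} = B \ A := by
  ext w; simp only [collapse, mem_preimage, mem_singleton_iff, mem_diff]
  by_cases hA : w ∈ A <;> by_cases hB : w ∈ B <;> simp [hA, hB]

lemma collapse_pre2 (hAB : A ⊆ B) : collapse A B ⁻¹' {2} = Bᶜ := by
  ext w; simp only [collapse, mem_preimage, mem_singleton_iff, mem_compl_iff]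
  by_cases hA : w ∈ A <;> by_cases hB : w ∈ B <;>
    simp [hA, hB] <;> exact hB (hAB hA)

lemma collapse_preB (hAB : A ⊆ B) : collapse A B ⁻¹' {0, 1} = B := by
  ext w; simp only [collapse, mem_preimage, mem_insert_iff, mem_singleton_iff]
  by_cases hA : w ∈ A <;> by_cases hB : w ∈ B <;> simp [hA, hB] <;> exact hB (hAB hA)

lemma collapse_measurable (hA : MeasurableSet A) (hB : MeasurableSet B) (hAB : A ⊆ B) :
    Measurable (collapse A B) := by
  apply measurable_to_countable'
  intro x
  fin_cases x
  · show MeasurableSet (collapse A B ⁻¹' {0})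
    rw [collapse_pre0]; exact hA
  · show MeasurableSet (collapse A B ⁻¹' {1})
    rw [collapse_pre1]; exact hB.diff hA
  · show MeasurableSet (collapse A B ⁻¹' {2})
    rw [collapse_pre2 hAB]; exact hB.compl

lemma collapse_surjective (hAB : A ⊆ B) (h1 : A.Nonempty) (h2 : (B \ A).Nonempty)
    (h3 : (Bᶜ).Nonempty) : Function.Surjective (collapse A B) := by
  intro x
  fin_cases x
  · exact ⟨h1.choose, by have := h1.choose_spec; simp [collapse, this]⟩
  · obtain ⟨w, hwB, hwA⟩ := h2
    exact ⟨w, by simp [collapse, hwA, hwB]⟩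
  · obtain ⟨w, hw⟩ := h3
    have hwB : w ∉ B := hw
    exact ⟨w, by simp [collapse, hwB, show w ∉ A from fun h => hwB (hAB h)]⟩

end Collapse

variable {U : UpdFamily}

lemma three_exists (h2 : P2 U) {W1 W2 : Type} [MeasurableSpace W1] [MeasurableSpace W2]
    (μ1 : ProbabilityMeasure W1) (μ2 : ProbabilityMeasure W2) (ν1 : ProbabilityMeasure W1)
    {A1 B1 : Set W1} {A2 B2 : Set W2}
    (hA1 : MeasurableSet A1) (hB1 : MeasurableSet B1)
    (hA2 : MeasurableSet A2) (hB2 : MeasurableSet B2)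
    (hAB1 : A1 ⊆ B1) (hAB2 : A2 ⊆ B2)
    (ne1 : A1.Nonempty) (ne1' : (B1 \ A1).Nonempty) (ne1'' : (B1ᶜ).Nonempty)
    (ne2 : A2.Nonempty) (ne2' : (B2 \ A2).Nonempty) (ne2'' : (B2ᶜ).Nonempty)
    (hA : (μ1 : Measure W1) A1 = (μ2 : Measure W2) A2)
    (hB : (μ1 : Measure W1) B1 = (μ2 : Measure W2) B2)
    (hν1 : ν1 ∈ U W1 {μ1} B1) :
    ∃ ν2 ∈ U W2 {μ2} B2, (ν2 : Measure W2) A2 = (ν1 : Measure W1) A1 := by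
  have hf : Measurable (collapse A1 B1) := collapse_measurable hA1 hB1 hAB1
  have hg : Measurable (collapse A2 B2) := collapse_measurable hA2 hB2 hAB2
  have hfs : Function.Surjective (collapse A1 B1) := collapse_surjective hAB1 ne1 ne1' ne1''
  have hgs : Function.Surjective (collapse A2 B2) := collapse_surjective hAB2 ne2 ne2' ne2''
  have hBt : MeasurableSet ({0, 1} : Set (Fin 3)) :=
    (measurableSet_singleton 1).insert 0
  -- pushforwards agree
  have hpush : pushPM hf μ1 = pushPM hg μ2 := by
    apply Subtype.ext
    rw [Measure.ext_iff_singleton]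
    intro a
    fin_cases a
    · show (pushPM hf μ1 : Measure (Fin 3)) {0} = (pushPM hg μ2 : Measure (Fin 3)) {0}
      rw [pushPM_apply hf μ1 (measurableSet_singleton _),
        pushPM_apply hg μ2 (measurableSet_singleton _)]
      rw [collapse_pre0, collapse_pre0]
      exact hA
    · show (pushPM hf μ1 : Measure (Fin 3)) {1} = (pushPM hg μ2 : Measure (Fin 3)) {1}
      rw [pushPM_apply hf μ1 (measurableSet_singleton _),
        pushPM_apply hg μ2 (measurableSet_singleton _)]
      rw [collapse_pre1, collapse_pre1]
      rw [measure_diff hAB1 hA1.nullMeasurableSet (measure_ne_top _ _),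
        measure_diff hAB2 hA2.nullMeasurableSet (measure_ne_top _ _), hA, hB]
    · show (pushPM hf μ1 : Measure (Fin 3)) {2} = (pushPM hg μ2 : Measure (Fin 3)) {2}
      rw [pushPM_apply hf μ1 (measurableSet_singleton _),
        pushPM_apply hg μ2 (measurableSet_singleton _)]
      rw [collapse_pre2 hAB1, collapse_pre2 hAB2]
      rw [measure_compl hB1 (measure_ne_top _ _), measure_compl hB2 (measure_ne_top _ _),
        hB, measure_univ, measure_univ]
  -- membership transfer
  have key1 := h2 W1 (Fin 3) _ hf hfs {μ1} {0, 1} hBt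
  have key2 := h2 W2 (Fin 3) _ hg hgs {μ2} {0, 1} hBt
  rw [image_singleton] at key1 key2
  rw [collapse_preB hAB1] at key1
  rw [collapse_preB hAB2] at key2
  have hmem : pushPM hf ν1 ∈ U (Fin 3) {pushPM hg μ2} ({0, 1} : Set (Fin 3)) := by
    rw [← hpush, key1]
    exact mem_image_of_mem _ hν1
  rw [key2] at hmem
  obtain ⟨ν2, hν2, hpν⟩ := hmem
  refine ⟨ν2, hν2, ?_⟩
  have := congrArg (fun m : ProbabilityMeasure (Fin 3) => (m : Measure (Fin 3)) {0}) hpν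
  try simp only at this
  rw [pushPM_apply hg ν2 (measurableSet_singleton _),
    pushPM_apply hf ν1 (measurableSet_singleton _),
    collapse_pre0, collapse_pre0] at this
  exact this


section Collapse2
variable {W : Type} [MeasurableSpace W]

def collapse2 (A : Set W) (w : W) : Fin 2 := if w ∈ A then 0 else 1

variable {A : Set W}

omit [MeasurableSpace W] in
lemma collapse2_pre0 : collapse2 A ⁻¹' {0} = A := by
  ext w; simp only [collapse2, mem_preimage, mem_singleton_iff]
  by_cases hA : w ∈ A <;> simp [hA]

omit [MeasurableSpace W] in
lemma collapse2_pre1 : collapse2 A ⁻¹' {1} = Aᶜ := by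
  ext w; simp only [collapse2, mem_preimage, mem_singleton_iff, mem_compl_iff]
  by_cases hA : w ∈ A <;> simp [hA]

lemma collapse2_measurable (hA : MeasurableSet A) : Measurable (collapse2 A) := by
  apply measurable_to_countable'
  intro x
  fin_cases x
  · show MeasurableSet (collapse2 A ⁻¹' {0}); rw [collapse2_pre0]; exact hA
  · show MeasurableSet (collapse2 A ⁻¹' {1}); rw [collapse2_pre1]; exact hA.compl

omit [MeasurableSpace W] in
lemma collapse2_surjective (h1 : A.Nonempty) (h2 : (Aᶜ).Nonempty) :
    Function.Surjective (collapse2 A) := by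
  intro x
  fin_cases x
  · exact ⟨h1.choose, by have := h1.choose_spec; simp [collapse2, this]⟩
  · obtain ⟨w, hw⟩ := h2
    have hwA : w ∉ A := hw
    exact ⟨w, by simp [collapse2, hwA]⟩

end Collapse2

lemma two_exists (h2 : P2 U) {W1 W2 : Type} [MeasurableSpace W1] [MeasurableSpace W2]
    (μ1 : ProbabilityMeasure W1) (μ2 : ProbabilityMeasure W2) (ν1 : ProbabilityMeasure W1)
    {A1 : Set W1} {A2 : Set W2}
    (hA1 : MeasurableSet A1) (hA2 : MeasurableSet A2)
    (ne1 : A1.Nonempty) (ne1' : (A1ᶜ).Nonempty)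
    (ne2 : A2.Nonempty) (ne2' : (A2ᶜ).Nonempty)
    (hA : (μ1 : Measure W1) A1 = (μ2 : Measure W2) A2)
    (hν1 : ν1 ∈ U W1 {μ1} univ) :
    ∃ ν2 ∈ U W2 {μ2} univ, (ν2 : Measure W2) A2 = (ν1 : Measure W1) A1 := by
  have hf : Measurable (collapse2 A1) := collapse2_measurable hA1
  have hg : Measurable (collapse2 A2) := collapse2_measurable hA2
  have hfs : Function.Surjective (collapse2 A1) := collapse2_surjective ne1 ne1'
  have hgs : Function.Surjective (collapse2 A2) := collapse2_surjective ne2 ne2'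
  have hpush : pushPM hf μ1 = pushPM hg μ2 := by
    apply Subtype.ext
    rw [Measure.ext_iff_singleton]
    intro a
    fin_cases a
    · show (pushPM hf μ1 : Measure (Fin 2)) {0} = (pushPM hg μ2 : Measure (Fin 2)) {0}
      rw [pushPM_apply hf μ1 (measurableSet_singleton _),
        pushPM_apply hg μ2 (measurableSet_singleton _), collapse2_pre0, collapse2_pre0]
      exact hA
    · show (pushPM hf μ1 : Measure (Fin 2)) {1} = (pushPM hg μ2 : Measure (Fin 2)) {1}
      rw [pushPM_apply hf μ1 (measurableSet_singleton _),
        pushPM_apply hg μ2 (measurableSet_singleton _), collapse2_pre1, collapse2_pre1,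
        measure_compl hA1 (measure_ne_top _ _), measure_compl hA2 (measure_ne_top _ _),
        hA, measure_univ, measure_univ]
  have key1 := h2 W1 (Fin 2) _ hf hfs {μ1} univ MeasurableSet.univ
  have key2 := h2 W2 (Fin 2) _ hg hgs {μ2} univ MeasurableSet.univ
  rw [image_singleton, preimage_univ] at key1 key2
  have hmem : pushPM hf ν1 ∈ U (Fin 2) {pushPM hg μ2} univ := by
    rw [← hpush, key1]
    exact mem_image_of_mem _ hν1
  rw [key2] at hmem
  obtain ⟨ν2, hν2, hpν⟩ := hmem
  refine ⟨ν2, hν2, ?_⟩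
  have := congrArg (fun m : ProbabilityMeasure (Fin 2) => (m : Measure (Fin 2)) {0}) hpν
  try simp only at this
  rw [pushPM_apply hg ν2 (measurableSet_singleton _),
    pushPM_apply hf ν1 (measurableSet_singleton _),
    collapse2_pre0, collapse2_pre0] at this
  exact this


lemma PM_app_one {W : Type} [MeasurableSpace W] (μ : ProbabilityMeasure W) {s : Set W}
    (h : μ s = 1) : (μ : Measure W) s = 1 := by
  rw [← ProbabilityMeasure.ennreal_coeFn_eq_coeFn_toMeasure, h]
  rfl

end Aux

/-- P1, P2, and P6' together imply P6''. -/
theorem stmt14 (U : UpdFamily) (hbase : UpdBase U) (h1 : P1 U) (h2 : P2 U)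
    (h6 : P6' U) :
    ∀ (W : Type) [MeasurableSpace W] (Pr : ProbabilityMeasure W), ∃ c : ℝ≥0,
      ∀ (A B : Set W), MeasurableSet A → MeasurableSet B → 0 < Pr B →
        ∀ ν ∈ U W {Pr} B, ν A ≤ c * condProb Pr A B := by
  intro W _ Pr
  refine ⟨1, ?_⟩
  intro A B hA hB hPrB ν hν
  have hA₀ : MeasurableSet (A ∩ B) := hA.inter hB
  have hA₀B : A ∩ B ⊆ B := inter_subset_right
  have hPrB' : (Pr : Measure W) B ≠ 0 := by
    intro h0
    rw [← ProbabilityMeasure.ennreal_coeFn_eq_coeFn_toMeasure, ENNReal.coe_eq_zero] at h0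
    exact absurd (h0 ▸ hPrB) (lt_irrefl 0)
  -- P1 facts
  have hν1 : (ν : Measure W) B = 1 := PM_app_one ν (h1 W {Pr} B hB ν hν)
  have hνc : (ν : Measure W) Bᶜ = 0 := by
    rw [measure_compl hB (measure_ne_top _ _), hν1, measure_univ, tsub_self]
  have hmono : (ν : Measure W) A ≤ (ν : Measure W) (A ∩ B) :=
    calc (ν : Measure W) A ≤ (ν : Measure W) ((A ∩ B) ∪ Bᶜ) := by
          apply measure_mono
          intro w hw
          by_cases h : w ∈ B
          · exact Or.inl ⟨hw, h⟩
          · exact Or.inr h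
      _ ≤ (ν : Measure W) (A ∩ B) + (ν : Measure W) Bᶜ := measure_union_le _ _
      _ = (ν : Measure W) (A ∩ B) := by rw [hνc, add_zero]
  -- coercion of the target
  have hcoe : ((1 * condProb Pr A B : ℝ≥0) : ℝ≥0∞)
      = (Pr : Measure W) (A ∩ B) / (Pr : Measure W) B := by
    rw [one_mul, condProb, ENNReal.coe_div hPrB.ne',
      ProbabilityMeasure.ennreal_coeFn_eq_coeFn_toMeasure,
      ProbabilityMeasure.ennreal_coeFn_eq_coeFn_toMeasure]
  suffices hkey : (ν : Measure W) (A ∩ B) ≤ (Pr : Measure W) (A ∩ B) / (Pr : Measure W) B by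
    rw [← ENNReal.coe_le_coe, ProbabilityMeasure.ennreal_coeFn_eq_coeFn_toMeasure, hcoe]
    exact le_trans hmono hkey
  -- trivial cases
  by_cases hA₀e : A ∩ B = ∅
  · rw [hA₀e, measure_empty]
    exact zero_le
  by_cases hA₀eqB : A ∩ B = B
  · rw [hA₀eqB, hν1, ENNReal.div_self hPrB' (measure_ne_top _ _)]
  have hA₀ne : (A ∩ B).Nonempty := nonempty_iff_ne_empty.mpr hA₀e
  have hBA₀ne : (B \ (A ∩ B)).Nonempty := by
    rw [nonempty_iff_ne_empty]
    intro h0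
    exact hA₀eqB (Subset.antisymm hA₀B (diff_eq_empty.mp h0))
  -- real parameters
  set rb := ((Pr : Measure W) B).toReal with hrb_def
  set rp := ((Pr : Measure W) (A ∩ B)).toReal with hrp_def
  have hrb0 : 0 < rb := ENNReal.toReal_pos hPrB' (measure_ne_top _ _)
  have hrb1 : rb ≤ 1 := by
    have := ENNReal.toReal_mono (by simp) (prob_le_one (μ := (Pr : Measure W)) (s := B))
    simpa using this
  have hrp0 : 0 ≤ rp := ENNReal.toReal_nonneg
  have hrprb : rp ≤ rb :=
    ENNReal.toReal_mono (measure_ne_top _ _) (measure_mono hA₀B)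
  have hofrp : ENNReal.ofReal rp = (Pr : Measure W) (A ∩ B) :=
    ENNReal.ofReal_toReal (measure_ne_top _ _)
  have hofrb : ENNReal.ofReal rb = (Pr : Measure W) B :=
    ENNReal.ofReal_toReal (measure_ne_top _ _)
  rw [← hofrp, ← hofrb, ← ENNReal.ofReal_div_of_pos hrb0]
  -- ℝ-side sets
  have hF0meas : MeasurableSet (Iio rp ∪ {(5:ℝ)}) :=
    measurableSet_Iio.union (measurableSet_singleton 5)
  have hF0ne : (Iio rp ∪ {(5:ℝ)}).Nonempty := ⟨5, Or.inr rfl⟩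
  have h5big : (5:ℝ) ∉ Iio rp := by
    rw [mem_Iio]; push_neg; linarith
  have h6big : (6:ℝ) ∉ Iio rp := by
    rw [mem_Iio]; push_neg; linarith
  have h6rb : (6:ℝ) ∉ Iio rb := by
    rw [mem_Iio]; push_neg; linarith
  have h5rb : (5:ℝ) ∉ Iio rb := by
    rw [mem_Iio]; push_neg; linarith
  have hmu0F0 : mu0 (Iio rp ∪ {(5:ℝ)}) = ENNReal.ofReal rp := by
    rw [mu0_union_null (mu0_singleton 5), mu0_Iio (by linarith)]
  by_cases hBc : Bᶜ = (∅ : Set W)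
  · -- B = univ : use the two-point collapse
    have hBuniv : B = univ := compl_empty_iff.mp hBc
    rw [hBuniv] at hν
    have hrbeq : rb = 1 := by
      rw [hrb_def, hBuniv, measure_univ, ENNReal.toReal_one]
    have hA₀cne : ((A ∩ B)ᶜ).Nonempty := ⟨hBA₀ne.choose, hBA₀ne.choose_spec.2⟩
    have hF0cne : ((Iio rp ∪ {(5:ℝ)})ᶜ).Nonempty := by
      refine ⟨6, ?_⟩
      simp only [mem_compl_iff, mem_union, mem_singleton_iff]
      push_neg
      exact ⟨h6big, by norm_num⟩
    have hmatch : (Pr : Measure W) (A ∩ B) = (muP : Measure ℝ) (Iio rp ∪ {(5:ℝ)}) := by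
      show _ = mu0 _
      rw [hmu0F0, hofrp]
    obtain ⟨ρ, hρ, hρF0⟩ := two_exists h2 Pr muP ν hA₀ hF0meas hA₀ne hA₀cne hF0ne hF0cne
      hmatch hν
    have hsub := h6 ℝ muP univ MeasurableSet.univ
    have hsame : ∀ A' A'' : Set ℝ, MeasurableSet A' → MeasurableSet A'' → A' ⊆ univ →
        A'' ⊆ univ → A'.Nonempty → A''.Nonempty → (univ \ A').Nonempty →
        (univ \ A'').Nonempty → mu0 A' = mu0 A'' →
        (ρ : Measure ℝ) A' = (ρ : Measure ℝ) A'' := by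
      intro A' A'' hm' hm'' _ _ hne' hne'' hc' hc'' hmu
      rw [← compl_eq_univ_diff] at hc' hc''
      obtain ⟨ρ2, hρ2, hρ2eq⟩ := two_exists h2 muP muP ρ hm' hm'' hne' hc' hne'' hc''
        (by exact hmu) hρ
      rw [hsub hρ2 hρ] at hρ2eq
      exact hρ2eq.symm
    have hrest0 : mu0 (univ \ Iio (1:ℝ)) = 0 := by
      rw [← compl_eq_univ_diff, compl_Iio]
      rw [mu0_apply]
      apply measure_mono_null (show Ici (1:ℝ) ∩ Icc 0 1 ⊆ {1} from ?_) Real.volume_singleton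
      intro z hz
      rcases hz with ⟨hz1, _, hz3⟩
      exact le_antisymm hz3 hz1
    have hbnd := rho_bound ρ univ 1 one_pos le_rfl (subset_univ _) MeasurableSet.univ
      hrest0 ⟨1, by simp⟩ (by rw [measure_univ]) hsame
      (Iio rp ∪ {(5:ℝ)}) hF0meas (subset_univ _) hF0ne
      (by rw [← compl_eq_univ_diff]; exact hF0cne)
    rw [hρF0] at hbnd
    rw [hrbeq]
    calc (ν : Measure W) (A ∩ B) ≤ ENNReal.ofReal ((mu0 (Iio rp ∪ {(5:ℝ)})).toReal / 1) := hbnd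
      _ = ENNReal.ofReal (rp / 1) := by rw [hmu0F0, ENNReal.toReal_ofReal hrp0]
  · -- Bᶜ nonempty : use the three-point collapse
    have hBcne : (Bᶜ).Nonempty := nonempty_iff_ne_empty.mpr hBc
    set E : Set ℝ := Iio rb ∪ {5, 6} with hE_def
    have hEmeas : MeasurableSet E :=
      measurableSet_Iio.union ((measurableSet_singleton 6).insert 5)
    have hpairnull : mu0 {(5:ℝ), 6} = 0 := by
      rw [insert_eq]
      exact measure_union_null (mu0_singleton 5) (mu0_singleton 6)
    have hmu0E : mu0 E = ENNReal.ofReal rb := by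
      rw [hE_def, mu0_union_null hpairnull, mu0_Iio hrb1]
    have hF0E : Iio rp ∪ {(5:ℝ)} ⊆ E := by
      apply union_subset
      · intro z hz
        exact Or.inl (Iio_subset_Iio hrprb hz)
      · intro z hz
        rw [mem_singleton_iff] at hz
        rw [hE_def]
        right
        simp [hz]
    have h6E : (6:ℝ) ∈ E := by rw [hE_def]; right; simp
    have hEF0ne : (E \ (Iio rp ∪ {(5:ℝ)})).Nonempty := by
      refine ⟨6, h6E, ?_⟩
      simp only [mem_union, mem_singleton_iff]
      push_neg
      exact ⟨h6big, by norm_num⟩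
    have hEcne : (Eᶜ).Nonempty := by
      refine ⟨7, ?_⟩
      simp only [hE_def, mem_compl_iff, mem_union, mem_insert_iff, mem_singleton_iff, mem_Iio]
      push_neg
      refine ⟨by linarith, by norm_num, by norm_num⟩
    have hmatchA : (Pr : Measure W) (A ∩ B) = (muP : Measure ℝ) (Iio rp ∪ {(5:ℝ)}) := by
      show _ = mu0 _
      rw [hmu0F0, hofrp]
    have hmatchB : (Pr : Measure W) B = (muP : Measure ℝ) E := by
      show _ = mu0 _
      rw [hmu0E, hofrb]
    obtain ⟨ρ, hρ, hρF0⟩ := three_exists h2 Pr muP ν hA₀ hB hF0meas hEmeas hA₀B hF0E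
      hA₀ne hBA₀ne hBcne hF0ne hEF0ne hEcne hmatchA hmatchB hν
    have hsub := h6 ℝ muP E hEmeas
    have hsame : ∀ A' A'' : Set ℝ, MeasurableSet A' → MeasurableSet A'' → A' ⊆ E →
        A'' ⊆ E → A'.Nonempty → A''.Nonempty → (E \ A').Nonempty →
        (E \ A'').Nonempty → mu0 A' = mu0 A'' →
        (ρ : Measure ℝ) A' = (ρ : Measure ℝ) A'' := by
      intro A' A'' hm' hm'' hs' hs'' hne' hne'' hc' hc'' hmu
      obtain ⟨ρ2, hρ2, hρ2eq⟩ := three_exists h2 muP muP ρ hm' hEmeas hm'' hEmeas hs' hs''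
        hne' hc' hEcne hne'' hc'' hEcne (by exact hmu) rfl hρ
      rw [hsub hρ2 hρ] at hρ2eq
      exact hρ2eq.symm
    have hrest0 : mu0 (E \ Iio rb) = 0 := by
      apply measure_mono_null (show E \ Iio rb ⊆ {(5:ℝ), 6} from ?_) hpairnull
      intro z hz
      rcases hz.1 with h | h
      · exact absurd h hz.2
      · exact h
    have hrestne : (E \ Iio rb).Nonempty := ⟨5, by rw [hE_def]; right; simp, h5rb⟩
    have hρE : (ρ : Measure ℝ) E = 1 := PM_app_one ρ (h1 ℝ {muP} E hEmeas ρ hρ)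
    have hbnd := rho_bound ρ E rb hrb0 hrb1 subset_union_left hEmeas hrest0 hrestne hρE hsame
      (Iio rp ∪ {(5:ℝ)}) hF0meas hF0E hF0ne hEF0ne
    rw [hρF0] at hbnd
    calc (ν : Measure W) (A ∩ B) ≤ ENNReal.ofReal ((mu0 (Iio rp ∪ {(5:ℝ)})).toReal / rb) := hbnd
      _ = ENNReal.ofReal (rp / rb) := by rw [hmu0F0, ENNReal.toReal_ofReal hrp0]
end

section
/- Let Upd satisfy P1, P2, and P6''. For all disjoint events A, B with A, B ⊆ C ⊊ W, every probability measure Pr with Pr(B) > 0 and Pr(C) > 0, and every Pr' ∈ Upd(Pr,C), there exists Pr'' ∈ Upd(Pr,C) such that Pr''(A) = Pr'(A) and Pr''(B) = (1 − Pr'(A))·Pr(B|C−A). -/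
open MeasureTheory ProbabilityTheory Set
open scoped Classical NNReal ENNReal

/- ===================== Auxiliary material for the proof ===================== -/

noncomputable section StmtAux

open MeasureTheory ProbabilityTheory Set
open scoped Classical NNReal ENNReal

instance stmtFact01 : Fact ((0:ℝ) < 1) := ⟨zero_lt_one⟩

/-- The circle of circumference 1. -/
abbrev S1 : Type := AddCircle (1:ℝ)

lemma volS1_univ : (volume : Measure S1) univ = 1 := by
  rw [AddCircle.measure_univ]; simp

instance : IsProbabilityMeasure (volume : Measure S1) := ⟨volS1_univ⟩

/-- A half-open arc on the circle. -/
def arc (x y : ℝ) : Set S1 := (QuotientAddGroup.mk : ℝ → S1) '' Ioc x y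

lemma s1_coe_eq_coe_iff {a b : ℝ} : (a : S1) = (b : S1) ↔ ∃ k : ℤ, a = b + k := by
  constructor
  · intro h
    obtain ⟨k, hk⟩ := AddSubgroup.mem_zmultiples_iff.mp (QuotientAddGroup.eq_iff_sub_mem.mp h.symm)
    rw [zsmul_eq_mul, mul_one] at hk
    exact ⟨-k, by push_cast; linarith⟩
  · rintro ⟨k, rfl⟩
    rw [QuotientAddGroup.eq_iff_sub_mem]
    exact AddSubgroup.mem_zmultiples_iff.mpr ⟨k, by rw [zsmul_eq_mul, mul_one]; push_cast; ring⟩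

lemma mem_arc {t : ℝ} {x y : ℝ} : (t : S1) ∈ arc x y ↔ ∃ k : ℤ, t + k ∈ Ioc x y := by
  constructor
  · rintro ⟨s, hs, hst⟩
    obtain ⟨k, hk⟩ := s1_coe_eq_coe_iff.mp hst
    refine ⟨k, ?_⟩
    have : t + (k : ℝ) = s := by linarith
    rwa [this]
  · rintro ⟨k, hk⟩
    exact ⟨t + k, hk, s1_coe_eq_coe_iff.mpr ⟨k, rfl⟩⟩

lemma preimage_arc (x y : ℝ) :
    (QuotientAddGroup.mk : ℝ → S1) ⁻¹' arc x y = ⋃ k : ℤ, Ioc (x - k) (y - k) := by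
  ext t
  simp only [mem_preimage, mem_iUnion, mem_Ioc]
  rw [mem_arc]
  constructor
  · rintro ⟨k, h1, h2⟩; exact ⟨k, by constructor <;> linarith⟩
  · rintro ⟨k, h1, h2⟩; exact ⟨k, by simp only [mem_Ioc]; constructor <;> linarith⟩

lemma measurableSet_arc (x y : ℝ) : MeasurableSet (arc x y) := by
  show MeasurableSet ((QuotientAddGroup.mk : ℝ → S1) ⁻¹' arc x y)
  rw [preimage_arc]
  exact MeasurableSet.iUnion fun k => measurableSet_Ioc

lemma volume_arc {x y : ℝ} (h1 : x ≤ y) (h2 : y ≤ x + 1) :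
    volume (arc x y) = ENNReal.ofReal (y - x) := by
  rw [AddCircle.add_projection_respects_measure (1:ℝ) x (measurableSet_arc x y)]
  have heq : (QuotientAddGroup.mk : ℝ → S1) ⁻¹' arc x y ∩ Ioc x (x + 1) = Ioc x y := by
    rw [preimage_arc]
    ext t
    simp only [mem_inter_iff, mem_iUnion, mem_Ioc]
    constructor
    · rintro ⟨⟨k, hk1, hk2⟩, ht1, ht2⟩
      have h3 : (k:ℝ) < 1 := by linarith
      have h4 : (-1:ℝ) < (k:ℝ) := by linarith
      have h5 : k < 1 := by exact_mod_cast h3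
      have h6 : -1 < k := by exact_mod_cast h4
      have : k = 0 := by omega
      subst this
      push_cast at hk1 hk2
      exact ⟨ht1, by linarith⟩
    · intro ⟨ht1, ht2⟩
      exact ⟨⟨0, by simpa using ⟨ht1, by linarith⟩⟩, ht1, by linarith⟩
  rw [heq, Real.volume_Ioc]

lemma volume_arc_le (x y : ℝ) : volume (arc x y) ≤ ENNReal.ofReal (y - x) := by
  rcases le_or_gt y x with h | h
  · have : Ioc x y = ∅ := Ioc_eq_empty (by exact not_lt.mpr h)
    simp [arc, this]
  rcases le_or_gt y (x + 1) with h2 | h2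
  · exact le_of_eq (volume_arc h.le h2)
  · calc volume (arc x y) ≤ volume (univ : Set S1) := measure_mono (subset_univ _)
      _ = 1 := volS1_univ
      _ ≤ ENNReal.ofReal (y - x) := by
          rw [show (1:ℝ≥0∞) = ENNReal.ofReal 1 by simp]
          exact ENNReal.ofReal_le_ofReal (by linarith)

lemma arc_preimage_add (s x y : ℝ) :
    (· + (s : S1)) ⁻¹' arc x y = arc (x - s) (y - s) := by
  ext t
  obtain ⟨a, rfl⟩ := QuotientAddGroup.mk_surjective t
  show ((a : S1) + (s : S1) ∈ arc x y) ↔ _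
  rw [← AddCircle.coe_add, mem_arc, mem_arc]
  simp only [mem_Ioc]
  constructor
  · rintro ⟨k, h1, h2⟩; exact ⟨k, by constructor <;> linarith⟩
  · rintro ⟨k, h1, h2⟩; exact ⟨k, by constructor <;> linarith⟩

lemma arc_diff_subset₁ {x y b : ℝ} (hxy : x ≤ y) :
    arc x (x + b) \ arc y (y + b) ⊆ arc x y := by
  rintro c ⟨⟨t, ht, rfl⟩, hc2⟩
  rcases le_or_gt t y with h | h
  · exact ⟨t, ⟨ht.1, h⟩, rfl⟩
  · exact absurd ⟨t, ⟨h, by linarith [ht.2]⟩, rfl⟩ hc2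

lemma arc_diff_subset₂ {x y b : ℝ} (hxy : x ≤ y) :
    arc y (y + b) \ arc x (x + b) ⊆ arc (x + b) (y + b) := by
  rintro c ⟨⟨t, ht, rfl⟩, hc2⟩
  rcases le_or_gt t (x + b) with h | h
  · exact absurd ⟨t, ⟨by linarith [ht.1], h⟩, rfl⟩ hc2
  · exact ⟨t, ⟨h, ht.2⟩, rfl⟩

end StmtAux

set_option maxHeartbeats 2000000 in
/-- the averaging lemma, under P1, P2, and P6''. -/
theorem stmt19 (U : UpdFamily) (hbase : UpdBase U) (h1 : P1 U) (h2 : P2 U)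
    (h6 : P6'' U)
    (W : Type) [MeasurableSpace W] (A B C : Set W)
    (hA : MeasurableSet A) (hB : MeasurableSet B) (hC : MeasurableSet C)
    (hdisj : Disjoint A B) (hAC : A ⊆ C) (hBC : B ⊆ C) (hCW : C ≠ Set.univ)
    (Pr : ProbabilityMeasure W) (hBpos : 0 < Pr B) (hCpos : 0 < Pr C) :
    ∀ Pr' ∈ U W {Pr} C, ∃ Pr'' ∈ U W {Pr} C,
      Pr'' A = Pr' A ∧ Pr'' B = (1 - Pr' A) * condProb Pr B (C \ A) := by
  classical
  intro Pr' hPr'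
  obtain ⟨w₀, hw₀⟩ := (ne_univ_iff_exists_notMem C).mp hCW
  -- basic sets
  set P : Set W := C \ A with hPdef
  have hPm : MeasurableSet P := hC.diff hA
  have hPC : P ⊆ C := diff_subset
  have hBP : B ⊆ P := subset_diff.mpr ⟨hBC, hdisj.symm⟩
  set R : Set W := P \ B with hRdef
  have hRm : MeasurableSet R := hPm.diff hB
  have hBR : Disjoint B R := disjoint_sdiff_right
  have hBuR : B ∪ R = P := union_diff_cancel hBP
  have hAuP : A ∪ P = C := union_diff_cancel hAC
  have hAP : Disjoint A P := disjoint_sdiff_right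
  -- basic measure facts
  have happ : ∀ s : Set W, ((Pr s : ℝ≥0) : ℝ≥0∞) = (Pr : Measure W) s := fun s =>
    ProbabilityMeasure.ennreal_coeFn_eq_coeFn_toMeasure Pr s
  have hPrB : (Pr : Measure W) B ≠ 0 := by
    rw [← happ]; exact_mod_cast hBpos.ne'
  have hPrC : (Pr : Measure W) C ≠ 0 := by
    rw [← happ]; exact_mod_cast hCpos.ne'
  have hPrP : (Pr : Measure W) P ≠ 0 := fun h0 => hPrB (measure_mono_null hBP h0)
  have hPrPsum : (Pr : Measure W) B + (Pr : Measure W) R = (Pr : Measure W) P := by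
    rw [← measure_union hBR hRm, hBuR]
  have hPrPnn : (Pr P : ℝ≥0) ≠ 0 := by
    intro h0; apply hPrP; rw [← happ, h0, ENNReal.coe_zero]
  -- the ratio b₀ = Pr(B)/Pr(C-A)
  set b₀ : ℝ≥0 := Pr B / Pr P with hb₀def
  have hb₀ENN : ((b₀ : ℝ≥0) : ℝ≥0∞) = (Pr : Measure W) B / (Pr : Measure W) P := by
    rw [hb₀def, ENNReal.coe_div hPrPnn, happ, happ]
  have hb₀pos : 0 < b₀ := by
    rw [pos_iff_ne_zero]
    exact div_ne_zero hBpos.ne' hPrPnn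
  have hb₀le : b₀ ≤ 1 := by
    rw [hb₀def]
    refine (div_le_one (pos_iff_ne_zero.mpr hPrPnn)).mpr ?_
    have : (Pr : Measure W) B ≤ (Pr : Measure W) P := measure_mono hBP
    rw [← happ, ← happ] at this
    exact_mod_cast this
  -- the arc E
  set E : Set S1 := arc 0 (b₀ : ℝ) with hEdef
  have hEm : MeasurableSet E := measurableSet_arc _ _
  have hEvol : volume E = (b₀ : ℝ≥0∞) := by
    rw [hEdef, volume_arc (by positivity) (by rw [zero_add]; exact_mod_cast hb₀le)]
    rw [sub_zero, ENNReal.ofReal_coe_nnreal]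
  -- the conditional measures
  set νB : ProbabilityMeasure W := condPM Pr B with hνBdef
  have hνBap : ∀ t : Set W, (νB : Measure W) t
      = ((Pr : Measure W) B)⁻¹ * (Pr : Measure W) (B ∩ t) := by
    intro t
    have hνBm : (νB : Measure W) = (Pr : Measure W)[|B] := by
      rw [hνBdef, condPM]; simp [hPrB]
    rw [hνBm]; exact cond_apply hB _ t
  have hνBc : (νB : Measure W) Bᶜ = 0 := by
    rw [hνBap]; simp
  set νR : ProbabilityMeasure W := condPM Pr R with hνRdef
  have hνRap : (Pr : Measure W) R ≠ 0 → ∀ t : Set W, (νR : Measure W) t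
      = ((Pr : Measure W) R)⁻¹ * (Pr : Measure W) (R ∩ t) := by
    intro hR0 t
    have hνRm : (νR : Measure W) = (Pr : Measure W)[|R] := by
      rw [hνRdef, condPM]; simp [hR0]
    rw [hνRm]; exact cond_apply hRm _ t
  -- vol Eᶜ = 1 - b₀, and it vanishes when Pr R = 0
  have hEcvol : volume Eᶜ = ((1 - b₀ : ℝ≥0) : ℝ≥0∞) := by
    rw [measure_compl hEm (measure_ne_top _ _), hEvol, volS1_univ, ENNReal.coe_sub,
      ENNReal.coe_one]
  have hEcvol0 : (Pr : Measure W) R = 0 → volume Eᶜ = 0 := by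
    intro hR0
    have hBeqP : (Pr : Measure W) B = (Pr : Measure W) P := by
      rw [← hPrPsum, hR0, add_zero]
    have : ((b₀ : ℝ≥0) : ℝ≥0∞) = 1 := by
      rw [hb₀ENN, hBeqP, ENNReal.div_self hPrP (measure_ne_top _ _)]
    have hb1 : b₀ = 1 := by exact_mod_cast this
    rw [hEcvol, hb1]; simp
  -- the product space
  set Pm : Measure (W × W × W × S1) :=
    (Pr : Measure W).prod ((νB : Measure W).prod ((νR : Measure W).prod
      (volume : Measure S1))) with hPmdef
  haveI hPmprob : IsProbabilityMeasure Pm := by rw [hPmdef]; infer_instance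
  set Pstar : ProbabilityMeasure (W × W × W × S1) := ⟨Pm, hPmprob⟩ with hPstardef
  have hprod : ∀ (s t u : Set W) (v : Set S1),
      Pm (s ×ˢ t ×ˢ u ×ˢ v) = (Pr : Measure W) s * ((νB : Measure W) t *
        ((νR : Measure W) u * volume v)) := by
    intro s t u v
    rw [hPmdef, Measure.prod_prod, Measure.prod_prod, Measure.prod_prod]
  -- the function g
  set g : W × W × W × S1 → W := fun p =>
    if p.1 ∈ P then
      (if p.2.2.2 ∈ E then (if p.2.1 ∈ B then p.2.1 else p.1)
       else (if p.2.2.1 ∈ R then p.2.2.1 else p.1))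
    else p.1 with hgdef
  have hgm : Measurable g := by
    have m1 : Measurable fun p : W × W × W × S1 => p.1 := measurable_fst
    have m2 : Measurable fun p : W × W × W × S1 => p.2.1 := measurable_snd.fst
    have m3 : Measurable fun p : W × W × W × S1 => p.2.2.1 := measurable_snd.snd.fst
    have m4 : Measurable fun p : W × W × W × S1 => p.2.2.2 := measurable_snd.snd.snd
    exact Measurable.ite (m1 hPm)
      (Measurable.ite (m4 hEm) (Measurable.ite (m2 hB) m2 m1)
        (Measurable.ite (m3 hRm) m3 m1)) m1
  have hgsurj : Function.Surjective g := by
    intro w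
    by_cases hw : w ∈ P
    · refine ⟨(w, w₀, w₀, (((b₀ : ℝ) : ℝ) : S1)), ?_⟩
      have ht : (((b₀ : ℝ) : ℝ) : S1) ∈ E := by
        rw [hEdef]
        exact ⟨(b₀ : ℝ), ⟨by exact_mod_cast hb₀pos, le_refl _⟩, rfl⟩
      have hw₀B : w₀ ∉ B := fun hmem => hw₀ (hBC hmem)
      simp only [hgdef, if_pos hw, if_pos ht, if_neg hw₀B]
    · exact ⟨(w, w₀, w₀, ((0 : ℝ) : S1)), by simp only [hgdef, if_neg hw]⟩
  -- decomposition of g-preimages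
  have hdec : ∀ D : Set W, g ⁻¹' D =
      ((D \ P) ×ˢ (univ : Set (W × W × S1)))
      ∪ (P ×ˢ (B ∩ D) ×ˢ (univ : Set W) ×ˢ E)
      ∪ ((P ∩ D) ×ˢ Bᶜ ×ˢ (univ : Set W) ×ˢ E)
      ∪ (P ×ˢ (univ : Set W) ×ˢ (R ∩ D) ×ˢ Eᶜ)
      ∪ ((P ∩ D) ×ˢ (univ : Set W) ×ˢ Rᶜ ×ˢ Eᶜ) := by
    intro D
    ext ⟨w, vb, vr, t⟩
    simp only [hgdef, mem_preimage, mem_union, mem_prod, mem_univ, true_and, and_true,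
      mem_inter_iff, mem_compl_iff, mem_diff]
    by_cases h1 : w ∈ P <;> by_cases h2 : t ∈ E <;> by_cases h3 : vb ∈ B <;>
      by_cases h4 : vr ∈ R <;> simp [h1, h2, h3, h4] <;> tauto
  -- cancellation helpers
  have hcancel : ∀ (p b x : ℝ≥0∞), p ≠ 0 → p ≠ ∞ → b ≠ 0 → b ≠ ∞ →
      p * ((b⁻¹ * x) * (1 * (b / p))) = x := by
    intro p b x hp0 hp hb0 hbt
    rw [one_mul, div_eq_mul_inv]
    calc p * (b⁻¹ * x * (b * p⁻¹)) = x * (b⁻¹ * b) * (p * p⁻¹) := by ring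
    _ = x := by
      rw [ENNReal.inv_mul_cancel hb0 hbt, ENNReal.mul_inv_cancel hp0 hp, mul_one, mul_one]
  have hcancel' : ∀ (p r x : ℝ≥0∞), p ≠ 0 → p ≠ ∞ → r ≠ 0 → r ≠ ∞ →
      p * (1 * ((r⁻¹ * x) * (r / p))) = x := by
    intro p r x hp0 hp hr0 hrt
    rw [one_mul, div_eq_mul_inv]
    calc p * (r⁻¹ * x * (r * p⁻¹)) = x * (r⁻¹ * r) * (p * p⁻¹) := by ring
    _ = x := by
      rw [ENNReal.inv_mul_cancel hr0 hrt, ENNReal.mul_inv_cancel hp0 hp, mul_one, mul_one]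
  have h1b : ((1 - b₀ : ℝ≥0) : ℝ≥0∞) = (Pr : Measure W) R / (Pr : Measure W) P := by
    rw [ENNReal.coe_sub, ENNReal.coe_one, hb₀ENN]
    have hsum : (Pr : Measure W) B / (Pr : Measure W) P
        + (Pr : Measure W) R / (Pr : Measure W) P = 1 := by
      rw [ENNReal.div_add_div_same, hPrPsum, ENNReal.div_self hPrP (measure_ne_top _ _)]
    rw [← hsum, ENNReal.add_sub_cancel_left]
    exact (ENNReal.div_lt_top (measure_ne_top _ _) hPrP).ne
  -- the pushforward of Pm under g is Pr
  have hgmap : Measure.map g Pm = (Pr : Measure W) := by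
    refine Measure.ext fun D hD => ?_
    rw [Measure.map_apply hgm hD, hdec D]
    have hm0 : MeasurableSet ((D \ P) ×ˢ (univ : Set (W × W × S1))) :=
      (hD.diff hPm).prod MeasurableSet.univ
    have hm1 : MeasurableSet (P ×ˢ (B ∩ D) ×ˢ (univ : Set W) ×ˢ E) :=
      hPm.prod ((hB.inter hD).prod (MeasurableSet.univ.prod hEm))
    have hm2 : MeasurableSet ((P ∩ D) ×ˢ Bᶜ ×ˢ (univ : Set W) ×ˢ E) :=
      (hPm.inter hD).prod (hB.compl.prod (MeasurableSet.univ.prod hEm))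
    have hm3 : MeasurableSet (P ×ˢ (univ : Set W) ×ˢ (R ∩ D) ×ˢ Eᶜ) :=
      hPm.prod (MeasurableSet.univ.prod ((hRm.inter hD).prod hEm.compl))
    have hm4 : MeasurableSet ((P ∩ D) ×ˢ (univ : Set W) ×ˢ Rᶜ ×ˢ Eᶜ) :=
      (hPm.inter hD).prod (MeasurableSet.univ.prod (hRm.compl.prod hEm.compl))
    have d01 : Disjoint ((D \ P) ×ˢ (univ : Set (W × W × S1)))
        (P ×ˢ (B ∩ D) ×ˢ (univ : Set W) ×ˢ E) := by
      rw [Set.disjoint_left]; rintro ⟨w, vb, vr, t⟩ hp hq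
      simp only [mem_prod, mem_univ, mem_diff, mem_inter_iff, mem_compl_iff, true_and,
        and_true] at hp hq
      tauto
    have d02 : Disjoint (((D \ P) ×ˢ (univ : Set (W × W × S1)))
        ∪ (P ×ˢ (B ∩ D) ×ˢ (univ : Set W) ×ˢ E))
        ((P ∩ D) ×ˢ Bᶜ ×ˢ (univ : Set W) ×ˢ E) := by
      rw [Set.disjoint_left]; rintro ⟨w, vb, vr, t⟩ hp hq
      simp only [mem_union, mem_prod, mem_univ, mem_diff, mem_inter_iff, mem_compl_iff,
        true_and, and_true] at hp hq
      tauto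
    have d03 : Disjoint ((((D \ P) ×ˢ (univ : Set (W × W × S1)))
        ∪ (P ×ˢ (B ∩ D) ×ˢ (univ : Set W) ×ˢ E))
        ∪ ((P ∩ D) ×ˢ Bᶜ ×ˢ (univ : Set W) ×ˢ E))
        (P ×ˢ (univ : Set W) ×ˢ (R ∩ D) ×ˢ Eᶜ) := by
      rw [Set.disjoint_left]; rintro ⟨w, vb, vr, t⟩ hp hq
      simp only [mem_union, mem_prod, mem_univ, mem_diff, mem_inter_iff, mem_compl_iff,
        true_and, and_true] at hp hq
      tauto
    have d04 : Disjoint (((((D \ P) ×ˢ (univ : Set (W × W × S1)))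
        ∪ (P ×ˢ (B ∩ D) ×ˢ (univ : Set W) ×ˢ E))
        ∪ ((P ∩ D) ×ˢ Bᶜ ×ˢ (univ : Set W) ×ˢ E))
        ∪ (P ×ˢ (univ : Set W) ×ˢ (R ∩ D) ×ˢ Eᶜ))
        ((P ∩ D) ×ˢ (univ : Set W) ×ˢ Rᶜ ×ˢ Eᶜ) := by
      rw [Set.disjoint_left]; rintro ⟨w, vb, vr, t⟩ hp hq
      simp only [mem_union, mem_prod, mem_univ, mem_diff, mem_inter_iff, mem_compl_iff,
        true_and, and_true] at hp hq
      tauto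
    rw [measure_union d04 hm4, measure_union d03 hm3, measure_union d02 hm2,
      measure_union d01 hm1]
    have hS0 : Pm ((D \ P) ×ˢ (univ : Set (W × W × S1))) = (Pr : Measure W) (D \ P) := by
      rw [hPmdef, Measure.prod_prod, measure_univ, mul_one]
    have hS1 : Pm (P ×ˢ (B ∩ D) ×ˢ (univ : Set W) ×ˢ E) = (Pr : Measure W) (B ∩ D) := by
      rw [hprod, hνBap, measure_univ, hEvol, hb₀ENN,
        show B ∩ (B ∩ D) = B ∩ D by rw [← inter_assoc, inter_self]]
      exact hcancel _ _ _ hPrP (measure_ne_top _ _) hPrB (measure_ne_top _ _)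
    have hS2 : Pm ((P ∩ D) ×ˢ Bᶜ ×ˢ (univ : Set W) ×ˢ E) = 0 := by
      rw [hprod, hνBc, zero_mul, mul_zero]
    have hS3 : Pm (P ×ˢ (univ : Set W) ×ˢ (R ∩ D) ×ˢ Eᶜ) = (Pr : Measure W) (R ∩ D) := by
      by_cases hR0 : (Pr : Measure W) R = 0
      · rw [hprod, hEcvol0 hR0, mul_zero, mul_zero, mul_zero]
        exact (measure_mono_null inter_subset_left hR0).symm
      · rw [hprod, measure_univ, hνRap hR0, hEcvol, h1b,
          show R ∩ (R ∩ D) = R ∩ D by rw [← inter_assoc, inter_self]]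
        exact hcancel' _ _ _ hPrP (measure_ne_top _ _) hR0 (measure_ne_top _ _)
    have hS4 : Pm ((P ∩ D) ×ˢ (univ : Set W) ×ˢ Rᶜ ×ˢ Eᶜ) = 0 := by
      by_cases hR0 : (Pr : Measure W) R = 0
      · rw [hprod, hEcvol0 hR0, mul_zero, mul_zero, mul_zero]
      · rw [hprod, hνRap hR0, inter_compl_self, measure_empty, mul_zero, zero_mul,
          mul_zero, mul_zero]
    rw [hS0, hS1, hS2, hS3, hS4, add_zero, add_zero]
    have hsplit : (Pr : Measure W) (B ∩ D) + (Pr : Measure W) (R ∩ D)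
        = (Pr : Measure W) (D ∩ P) := by
      rw [← hBuR, inter_union_distrib_left, inter_comm B D, inter_comm R D,
        measure_union (hBR.mono inter_subset_right inter_subset_right) (hD.inter hRm)]
    rw [add_assoc, hsplit, measure_diff_add_inter D hPm]
  -- membership machinery via P2 with fst
  have hfstsurj : Function.Surjective (Prod.fst : W × W × W × S1 → W) :=
    fun w => ⟨(w, w₀, w₀, ((0:ℝ) : S1)), rfl⟩
  have hfstmap : Measure.map Prod.fst Pm = (Pr : Measure W) := by
    rw [hPmdef, Measure.map_fst_prod, measure_univ, one_smul]
  have hPstm : (Pstar : Measure (W × W × W × S1)) = Pm := rfl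
  have hpushf : pushPM (measurable_fst) Pstar = Pr := by
    apply Subtype.ext
    show ((pushPM (measurable_fst) Pstar : ProbabilityMeasure W) : Measure W) = _
    rw [pushPM, ProbabilityMeasure.toMeasure_map, hPstm, hfstmap]
    rfl
  have hCstm : MeasurableSet ((Prod.fst : W × W × W × S1 → W) ⁻¹' C) := measurable_fst hC
  have hP2f := h2 (W × W × W × S1) W Prod.fst measurable_fst hfstsurj {Pstar} C hC
  rw [image_singleton, hpushf] at hP2f
  obtain ⟨Q, hQU, hQf⟩ : ∃ Q ∈ U (W × W × W × S1) {Pstar} (Prod.fst ⁻¹' C),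
      pushPM measurable_fst Q = Pr' := by
    have hmem := hP2f ▸ hPr'
    simpa [Set.mem_image] using hmem
  -- P6'' constant
  obtain ⟨c, hc⟩ := h6 (W × W × W × S1) Pstar
  have happQ : ∀ (ν : ProbabilityMeasure (W × W × W × S1)) (s : Set (W × W × W × S1)),
      ((ν s : ℝ≥0) : ℝ≥0∞) = (ν : Measure (W × W × W × S1)) s := fun ν s =>
    ProbabilityMeasure.ennreal_coeFn_eq_coeFn_toMeasure ν s
  -- null-set transfer
  have hQnull : ∀ (ν : ProbabilityMeasure (W × W × W × S1)),
      ν ∈ U (W × W × W × S1) {Pstar} (Prod.fst ⁻¹' C) →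
      ∀ N : Set (W × W × W × S1), MeasurableSet N → Pm N = 0 →
      (ν : Measure (W × W × W × S1)) N = 0 := by
    intro ν hν N hN hN0
    have hb := hc N (Prod.fst ⁻¹' C) hN hCstm ν hν
    have hcp : condProb Pstar N (Prod.fst ⁻¹' C) = 0 := by
      rw [condProb]
      have : Pstar (N ∩ Prod.fst ⁻¹' C) = 0 := by
        have : ((Pstar (N ∩ Prod.fst ⁻¹' C) : ℝ≥0) : ℝ≥0∞) = 0 := by
          rw [happQ, hPstm]
          exact measure_mono_null inter_subset_left hN0
        exact_mod_cast this
      rw [this, zero_div]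
    rw [hcp, mul_zero, le_zero_iff] at hb
    rw [← happQ, hb, ENNReal.coe_zero]
  -- P1 : Q gives C* probability 1
  have hQCst : (Q : Measure (W × W × W × S1)) (Prod.fst ⁻¹' C) = 1 := by
    have := h1 (W × W × W × S1) {Pstar} (Prod.fst ⁻¹' C) hCstm Q hQU
    rw [← happQ, this, ENNReal.coe_one]
  have hQA : (Q : Measure (W × W × W × S1)) (Prod.fst ⁻¹' A) = (Pr' : Measure W) A := by
    have : Measure.map Prod.fst (Q : Measure (W × W × W × S1)) = (Pr' : Measure W) := by
      rw [← hQf, pushPM, ProbabilityMeasure.toMeasure_map]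
    rw [← this, Measure.map_apply measurable_fst hA]
  -- the t-marginal of Q on the middle region
  set m : Measure S1 := Measure.map (fun p : W × W × W × S1 => p.2.2.2)
    ((Q : Measure (W × W × W × S1)).restrict (Prod.fst ⁻¹' P)) with hmdef
  have hmapp : ∀ F : Set S1, MeasurableSet F →
      m F = (Q : Measure (W × W × W × S1))
        (Prod.fst ⁻¹' P ∩ (fun p : W × W × W × S1 => p.2.2.2) ⁻¹' F) := by
    intro F hF
    rw [hmdef, Measure.map_apply measurable_snd.snd.snd hF,
      Measure.restrict_apply (measurable_snd.snd.snd hF), inter_comm]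
  have hPF : ∀ F : Set S1, (Prod.fst ⁻¹' P ∩ (fun p : W × W × W × S1 => p.2.2.2) ⁻¹' F)
      = P ×ˢ (univ : Set W) ×ˢ (univ : Set W) ×ˢ F := by
    intro F
    ext ⟨w, vb, vr, t⟩
    simp [Set.mem_prod]
  -- domination of m by K • volume
  set K : ℝ≥0∞ := c * (Pr : Measure W) P / (Pr : Measure W) C with hKdef
  have hKfin : K ≠ ∞ := by
    rw [hKdef]
    exact (ENNReal.div_lt_top (ENNReal.mul_ne_top ENNReal.coe_ne_top (measure_ne_top _ _))
      hPrC).ne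
  have hPstCst : Pstar (Prod.fst ⁻¹' C) ≠ 0 := by
    intro h0
    apply hPrC
    have : ((Pstar (Prod.fst ⁻¹' C) : ℝ≥0) : ℝ≥0∞) = 0 := by rw [h0, ENNReal.coe_zero]
    rw [happQ, hPstm] at this
    rw [← hfstmap, Measure.map_apply measurable_fst hC]
    exact this
  have hPmCst : Pm (Prod.fst ⁻¹' C) = (Pr : Measure W) C := by
    rw [← hfstmap, Measure.map_apply measurable_fst hC]
  have hm_le : ∀ F : Set S1, MeasurableSet F → m F ≤ K * volume F := by
    intro F hF
    rw [hmapp F hF]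
    have hNm : MeasurableSet (Prod.fst ⁻¹' P ∩ (fun p : W × W × W × S1 => p.2.2.2) ⁻¹' F) :=
      (measurable_fst hPm).inter (measurable_snd.snd.snd hF)
    have hb := hc _ (Prod.fst ⁻¹' C) hNm hCstm Q hQU
    have hcoe := ENNReal.coe_le_coe.mpr hb
    rw [ENNReal.coe_mul, condProb, ENNReal.coe_div (by
      intro h0; apply hPstCst; exact_mod_cast h0), happQ, happQ, happQ, hPstm] at hcoe
    have hsub : (Prod.fst ⁻¹' P ∩ (fun p : W × W × W × S1 => p.2.2.2) ⁻¹' F)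
        ∩ Prod.fst ⁻¹' C = Prod.fst ⁻¹' P ∩ (fun p : W × W × W × S1 => p.2.2.2) ⁻¹' F := by
      rw [inter_eq_left]
      exact inter_subset_left.trans (preimage_mono hPC)
    rw [hsub, hPF, hprod, measure_univ, measure_univ, one_mul, one_mul, hPmCst] at hcoe
    rw [hPF]
    refine hcoe.trans (le_of_eq ?_)
    rw [hKdef, div_eq_mul_inv, div_eq_mul_inv]
    ring
  haveI hmfinite : IsFiniteMeasure m := by
    constructor
    rw [hmdef]
    calc (Measure.map (fun p : W × W × W × S1 => p.2.2.2)
        ((Q : Measure _).restrict (Prod.fst ⁻¹' P))) univ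
        ≤ (Q : Measure (W × W × W × S1)) univ := by
          rw [Measure.map_apply measurable_snd.snd.snd MeasurableSet.univ]
          exact (Measure.restrict_apply MeasurableSet.univ).le.trans
            (measure_mono (subset_univ _))
    _ = 1 := measure_univ
    _ < ⊤ := ENNReal.one_lt_top
  have hmfin : ∀ s : Set S1, m s ≠ ∞ := fun s => measure_ne_top m s
  -- total mass of m
  have hmuniv : (Pr' : Measure W) A + m univ = 1 := by
    have h1' : m univ = (Q : Measure (W × W × W × S1)) (Prod.fst ⁻¹' P) := by
      rw [hmapp univ MeasurableSet.univ, preimage_univ, inter_univ]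
    have hsplitC : (Prod.fst : W × W × W × S1 → W) ⁻¹' C
        = Prod.fst ⁻¹' A ∪ Prod.fst ⁻¹' P := by
      rw [← preimage_union, hAuP]
    rw [h1', ← hQA, ← measure_union (hAP.preimage Prod.fst) (measurable_fst hPm),
      ← hsplitC, hQCst]
  -- the averaging identity
  have hSpairm : MeasurableSet {p : ℝ × S1 | p.2 + ((p.1 : ℝ) : S1) ∈ E} := by
    have hadd : Measurable fun p : ℝ × S1 => p.2 + ((p.1 : ℝ) : S1) :=
      measurable_snd.add ((AddCircle.measurable_mk').comp measurable_fst)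
    exact hadd hEm
  have hav : ∫⁻ x in Ioc (0:ℝ) 1, m ((· + ((x : ℝ) : S1)) ⁻¹' E) = volume E * m univ := by
    have h1' := Measure.prod_apply (μ := volume.restrict (Ioc (0:ℝ) 1)) (ν := m) hSpairm
    have h2' := Measure.prod_apply_symm (μ := volume.restrict (Ioc (0:ℝ) 1)) (ν := m) hSpairm
    have hsec1 : ∀ x : ℝ, (Prod.mk x ⁻¹' {p : ℝ × S1 | p.2 + ((p.1 : ℝ) : S1) ∈ E})
        = (· + ((x : ℝ) : S1)) ⁻¹' E := fun x => rfl
    have hsec2 : ∀ t : S1, ((fun x : ℝ => (x, t)) ⁻¹' {p : ℝ × S1 | p.2 + ((p.1 : ℝ) : S1) ∈ E})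
        = (QuotientAddGroup.mk : ℝ → S1) ⁻¹' ((t + ·) ⁻¹' E) := fun t => rfl
    calc ∫⁻ x in Ioc (0:ℝ) 1, m ((· + ((x : ℝ) : S1)) ⁻¹' E)
        = ((volume.restrict (Ioc (0:ℝ) 1)).prod m) {p : ℝ × S1 | p.2 + ((p.1 : ℝ) : S1) ∈ E} := by
          rw [h1']
          refine lintegral_congr fun x => by rw [hsec1]
    _ = ∫⁻ t, (volume.restrict (Ioc (0:ℝ) 1))
          ((QuotientAddGroup.mk : ℝ → S1) ⁻¹' ((t + ·) ⁻¹' E)) ∂m := by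
          rw [h2']
          exact lintegral_congr fun t => by rw [hsec2]
    _ = ∫⁻ _, volume E ∂m := by
          refine lintegral_congr fun t => ?_
          have hEt : MeasurableSet ((t + ·) ⁻¹' E) :=
            (measurable_const_add t) hEm
          have hpre : (volume.restrict (Ioc (0:ℝ) (0 + 1)))
              ((QuotientAddGroup.mk : ℝ → S1) ⁻¹' ((t + ·) ⁻¹' E)) = volume ((t + ·) ⁻¹' E) :=
            (AddCircle.measurePreserving_mk 1 0).measure_preimage hEt.nullMeasurableSet
          rw [zero_add] at hpre
          rw [hpre, measure_preimage_add]
    _ = volume E * m univ := lintegral_const _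
  -- the real-valued sliding function
  set φ : ℝ → ℝ := fun x => (m (arc x (x + (b₀ : ℝ)))).toReal with hφdef
  have harcm : ∀ x y : ℝ, MeasurableSet (arc x y) := measurableSet_arc
  have hlipkey : ∀ x y : ℝ, x ≤ y →
      m (arc x (x + (b₀:ℝ))) ≤ m (arc y (y + (b₀:ℝ))) + K * ENNReal.ofReal (y - x)
      ∧ m (arc y (y + (b₀:ℝ))) ≤ m (arc x (x + (b₀:ℝ))) + K * ENNReal.ofReal (y - x) := by
    intro x y hxy
    constructor
    · calc m (arc x (x + (b₀:ℝ)))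
          ≤ m (arc x (x + (b₀:ℝ)) ∩ arc y (y + (b₀:ℝ)))
            + m (arc x (x + (b₀:ℝ)) \ arc y (y + (b₀:ℝ))) := measure_le_inter_add_diff m _ _
      _ ≤ m (arc y (y + (b₀:ℝ))) + m (arc x y) :=
          add_le_add (measure_mono inter_subset_right)
            (measure_mono (arc_diff_subset₁ hxy))
      _ ≤ m (arc y (y + (b₀:ℝ))) + K * ENNReal.ofReal (y - x) := by
          refine add_le_add_right ?_ _
          exact (hm_le _ (harcm _ _)).trans
            (mul_le_mul_right (volume_arc_le x y) K)
    · calc m (arc y (y + (b₀:ℝ)))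
          ≤ m (arc y (y + (b₀:ℝ)) ∩ arc x (x + (b₀:ℝ)))
            + m (arc y (y + (b₀:ℝ)) \ arc x (x + (b₀:ℝ))) := measure_le_inter_add_diff m _ _
      _ ≤ m (arc x (x + (b₀:ℝ))) + m (arc (x + (b₀:ℝ)) (y + (b₀:ℝ))) :=
          add_le_add (measure_mono inter_subset_right)
            (measure_mono (arc_diff_subset₂ hxy))
      _ ≤ m (arc x (x + (b₀:ℝ))) + K * ENNReal.ofReal (y - x) := by
          refine add_le_add_right ?_ _
          refine (hm_le _ (harcm _ _)).trans ?_
          refine (mul_le_mul_right (volume_arc_le _ _) K).trans ?_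
          rw [show y + (b₀:ℝ) - (x + (b₀:ℝ)) = y - x by ring]
  have hφlip : ∀ x y : ℝ, x ≤ y → |φ x - φ y| ≤ K.toReal * (y - x) := by
    intro x y hxy
    obtain ⟨hl1, hl2⟩ := hlipkey x y hxy
    have hKx : (K * ENNReal.ofReal (y - x)).toReal = K.toReal * (y - x) := by
      rw [ENNReal.toReal_mul, ENNReal.toReal_ofReal (by linarith)]
    have ht1 : φ x ≤ φ y + K.toReal * (y - x) := by
      rw [hφdef, ← hKx, ← ENNReal.toReal_add (hmfin _)
        (ENNReal.mul_ne_top hKfin ENNReal.ofReal_ne_top)]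
      exact ENNReal.toReal_mono
        (ENNReal.add_ne_top.mpr ⟨hmfin _, ENNReal.mul_ne_top hKfin ENNReal.ofReal_ne_top⟩) hl1
    have ht2 : φ y ≤ φ x + K.toReal * (y - x) := by
      rw [hφdef, ← hKx, ← ENNReal.toReal_add (hmfin _)
        (ENNReal.mul_ne_top hKfin ENNReal.ofReal_ne_top)]
      exact ENNReal.toReal_mono
        (ENNReal.add_ne_top.mpr ⟨hmfin _, ENNReal.mul_ne_top hKfin ENNReal.ofReal_ne_top⟩) hl2
    rw [abs_sub_le_iff]
    constructor <;> linarith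
  have hφcont : Continuous φ := by
    rw [Metric.continuous_iff]
    intro x ε hε
    refine ⟨ε / (K.toReal + 1), by positivity, fun y hy => ?_⟩
    have hK0 : 0 ≤ K.toReal := ENNReal.toReal_nonneg
    have hd : |φ y - φ x| ≤ K.toReal * |y - x| := by
      rcases le_total y x with h | h
      · have h2 := hφlip y x h
        have habs : |y - x| = x - y := by
          rw [abs_sub_comm]; exact abs_of_nonneg (by linarith)
        rw [habs]; exact h2
      · have h2 := hφlip x y h
        have habs : |y - x| = y - x := abs_of_nonneg (by linarith)
        rw [habs, abs_sub_comm]; exact h2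
    rw [Real.dist_eq] at hy ⊢
    calc |φ y - φ x| ≤ K.toReal * |y - x| := hd
    _ < (K.toReal + 1) * (ε / (K.toReal + 1)) := by
        apply lt_of_le_of_lt (mul_le_mul_of_nonneg_right (le_add_of_nonneg_right zero_le_one)
          (abs_nonneg _))
        exact mul_lt_mul_of_pos_left hy (by positivity)
    _ = ε := by field_simp
  set G : ℝ → ℝ := fun x => φ (-x) with hGdef
  have hGcont : Continuous G := hφcont.comp continuous_neg
  have hGnonneg : ∀ x, 0 ≤ G x := fun x => ENNReal.toReal_nonneg
  have hfinfG : ∀ x : ℝ, m ((· + ((x : ℝ) : S1)) ⁻¹' E) = ENNReal.ofReal (G x) := by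
    intro x
    have h1' : (0:ℝ) - x = -x := by ring
    have h2' : (b₀:ℝ) - x = -x + (b₀:ℝ) := by ring
    rw [hEdef, arc_preimage_add, h1', h2', hGdef, hφdef]
    exact (ENNReal.ofReal_toReal (hmfin _)).symm
  -- pass the average to the real integral
  set Tr : ℝ := (volume E * m univ).toReal with hTrdef
  have hTfin : volume E * m univ ≠ ∞ :=
    ENNReal.mul_ne_top (measure_ne_top _ _) (hmfin _)
  have hGint : ∫ x in Ioc (0:ℝ) 1, G x = Tr := by
    have hmeas : AEMeasurable (fun x : ℝ => m ((· + ((x : ℝ) : S1)) ⁻¹' E))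
        (volume.restrict (Ioc (0:ℝ) 1)) := by
      have : (fun x : ℝ => m ((· + ((x : ℝ) : S1)) ⁻¹' E))
          = fun x => ENNReal.ofReal (G x) := funext hfinfG
      rw [this]
      exact (ENNReal.measurable_ofReal.comp hGcont.measurable).aemeasurable
    have hlt : ∀ᵐ x ∂(volume.restrict (Ioc (0:ℝ) 1)),
        m ((· + ((x : ℝ) : S1)) ⁻¹' E) < ⊤ :=
      Filter.Eventually.of_forall fun x => (hmfin _).lt_top
    have := integral_toReal hmeas hlt
    rw [hav] at this
    rw [hTrdef, ← this]
    refine setIntegral_congr_fun measurableSet_Ioc fun x _ => ?_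
    rw [hfinfG x, ENNReal.toReal_ofReal (hGnonneg x)]
  have hvolIoc : volume (Ioc (0:ℝ) 1) = 1 := by
    rw [Real.volume_Ioc]; norm_num
  have hGintgrbl : IntegrableOn G (Ioc (0:ℝ) 1) volume := hGcont.integrableOn_Ioc
  -- existence of points below and above the average
  have hexle : ∃ x ∈ Ioc (0:ℝ) 1, G x ≤ Tr := by
    by_contra hcon
    push_neg at hcon
    have hnn : 0 ≤ᵐ[volume.restrict (Ioc (0:ℝ) 1)] fun x => G x - Tr :=
      (ae_restrict_iff' measurableSet_Ioc).2
        (Filter.Eventually.of_forall fun x hx => by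
          simp only [Pi.zero_apply]; linarith [hcon x hx])
    have hint0 : ∫ x in Ioc (0:ℝ) 1, (G x - Tr) = 0 := by
      rw [integral_sub hGintgrbl (integrableOn_const (by rw [hvolIoc]; exact ENNReal.one_ne_top)),
        hGint, setIntegral_const, measureReal_def, hvolIoc]
      simp
    have hae := (integral_eq_zero_iff_of_nonneg_ae hnn
      (hGintgrbl.sub (integrableOn_const (by rw [hvolIoc]; exact ENNReal.one_ne_top)))).1 hint0
    rw [Filter.EventuallyEq, ae_iff] at hae
    have hsup : Ioc (0:ℝ) 1 ⊆ {x | ¬ (fun x => G x - Tr) x = (0 : ℝ → ℝ) x} := by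
      intro x hx
      simp only [mem_setOf_eq, Pi.zero_apply]
      have := hcon x hx
      intro h0; linarith
    have : (volume.restrict (Ioc (0:ℝ) 1)) (Ioc (0:ℝ) 1) = 0 :=
      measure_mono_null hsup hae
    rw [Measure.restrict_apply measurableSet_Ioc, inter_self, hvolIoc] at this
    exact one_ne_zero this
  have hexge : ∃ x ∈ Ioc (0:ℝ) 1, Tr ≤ G x := by
    by_contra hcon
    push_neg at hcon
    have hnn : 0 ≤ᵐ[volume.restrict (Ioc (0:ℝ) 1)] fun x => Tr - G x :=
      (ae_restrict_iff' measurableSet_Ioc).2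
        (Filter.Eventually.of_forall fun x hx => by
          simp only [Pi.zero_apply]; linarith [hcon x hx])
    have hint0 : ∫ x in Ioc (0:ℝ) 1, (Tr - G x) = 0 := by
      rw [integral_sub (integrableOn_const (C := Tr) (by rw [hvolIoc]; exact ENNReal.one_ne_top)) hGintgrbl,
        hGint, setIntegral_const, measureReal_def, hvolIoc]
      simp
    have hae := (integral_eq_zero_iff_of_nonneg_ae hnn
      ((integrableOn_const (C := Tr) (by rw [hvolIoc]; exact ENNReal.one_ne_top)).sub hGintgrbl)).1 hint0
    rw [Filter.EventuallyEq, ae_iff] at hae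
    have hsup : Ioc (0:ℝ) 1 ⊆ {x | ¬ (fun x => Tr - G x) x = (0 : ℝ → ℝ) x} := by
      intro x hx
      simp only [mem_setOf_eq, Pi.zero_apply]
      have := hcon x hx
      intro h0; linarith
    have : (volume.restrict (Ioc (0:ℝ) 1)) (Ioc (0:ℝ) 1) = 0 :=
      measure_mono_null hsup hae
    rw [Measure.restrict_apply measurableSet_Ioc, inter_self, hvolIoc] at this
    exact one_ne_zero this
  -- intermediate value theorem
  obtain ⟨x₁, _, hx₁⟩ := hexle
  obtain ⟨x₂, _, hx₂⟩ := hexge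
  obtain ⟨x₀, _, hx₀⟩ : ∃ x₀ ∈ uIcc x₁ x₂, G x₀ = Tr := by
    have := intermediate_value_uIcc (a := x₁) (b := x₂) (f := G) hGcont.continuousOn
    have hTm : Tr ∈ uIcc (G x₁) (G x₂) := by
      rw [Set.mem_uIcc]
      left; exact ⟨hx₁, hx₂⟩
    obtain ⟨x₀, hx₀mem, hx₀⟩ := this hTm
    exact ⟨x₀, hx₀mem, hx₀⟩
  -- the rotation
  set crot : S1 := ((x₀ : ℝ) : S1) with hcrotdef
  set rot : W × W × W × S1 → W × W × W × S1 :=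
    Prod.map (id : W → W) (Prod.map (id : W → W) (Prod.map (id : W → W)
      (fun t : S1 => t + crot))) with hrotdef
  have hrotm : Measurable rot := by
    exact measurable_id.prodMap (measurable_id.prodMap (measurable_id.prodMap
      (measurable_add_const crot)))
  have hrotsurj : Function.Surjective rot := by
    intro p
    refine ⟨(p.1, p.2.1, p.2.2.1, p.2.2.2 - crot), ?_⟩
    simp [hrotdef, Prod.map, sub_add_cancel]
  have hrotpres : MeasurePreserving rot Pm Pm := by
    rw [hrotdef, hPmdef]
    exact (MeasurePreserving.id _).prod ((MeasurePreserving.id _).prod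
      ((MeasurePreserving.id _).prod (measurePreserving_add_right volume crot)))
  have hpushrot : pushPM hrotm Pstar = Pstar := by
    apply Subtype.ext
    show ((pushPM hrotm Pstar : ProbabilityMeasure (W × W × W × S1))
        : Measure (W × W × W × S1)) = ((Pstar : ProbabilityMeasure (W × W × W × S1))
        : Measure (W × W × W × S1))
    rw [pushPM, ProbabilityMeasure.toMeasure_map, hPstm, hrotpres.map_eq]
  have hrotCst : rot ⁻¹' ((Prod.fst : W × W × W × S1 → W) ⁻¹' C)
      = (Prod.fst : W × W × W × S1 → W) ⁻¹' C := rfl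
  have hQ2U : pushPM hrotm Q ∈ U (W × W × W × S1) {Pstar} (Prod.fst ⁻¹' C) := by
    have := h2 (W × W × W × S1) (W × W × W × S1) rot hrotm hrotsurj {Pstar}
      (Prod.fst ⁻¹' C) hCstm
    rw [image_singleton, hpushrot, hrotCst] at this
    rw [this]
    exact mem_image_of_mem _ hQU
  -- g's preimage of C
  have hgC : g ⁻¹' C = (Prod.fst : W × W × W × S1 → W) ⁻¹' C := by
    ext ⟨w, vb, vr, t⟩
    simp only [hgdef, mem_preimage]
    by_cases h1' : w ∈ P
    · have hw : w ∈ C := hPC h1'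
      rw [if_pos h1']
      refine iff_of_true ?_ hw
      split_ifs with h2' h3' h4'
      · exact hBC h3'
      · exact hw
      · exact hPC h4'.1
      · exact hw
    · rw [if_neg h1']
  have hgA : g ⁻¹' A = (Prod.fst : W × W × W × S1 → W) ⁻¹' A := by
    ext ⟨w, vb, vr, t⟩
    simp only [hgdef, mem_preimage]
    by_cases h1' : w ∈ P
    · have hwA : w ∉ A := h1'.2
      rw [if_pos h1']
      refine iff_of_false ?_ hwA
      split_ifs with h2' h3' h4'
      · exact fun hvA => (Set.disjoint_left.mp hdisj hvA) h3'
      · exact hwA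
      · exact fun hvA => h4'.1.2 hvA
      · exact hwA
    · rw [if_neg h1']
  -- membership of the final measure
  have hpushg : pushPM hgm Pstar = Pr := by
    apply Subtype.ext
    show ((pushPM hgm Pstar : ProbabilityMeasure W) : Measure W) = _
    rw [pushPM, ProbabilityMeasure.toMeasure_map, hPstm, hgmap]
    rfl
  have hP2g := h2 (W × W × W × S1) W g hgm hgsurj {Pstar} C hC
  rw [image_singleton, hpushg, hgC] at hP2g
  refine ⟨pushPM hgm (pushPM hrotm Q),
    by rw [hP2g]; exact mem_image_of_mem (pushPM hgm) hQ2U, ?_, ?_⟩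
  · -- Pr'' A = Pr' A
    have heval : ((pushPM hgm (pushPM hrotm Q) : ProbabilityMeasure W) : Measure W) A
        = (Q : Measure (W × W × W × S1)) (rot ⁻¹' (g ⁻¹' A)) := by
      rw [pushPM, ProbabilityMeasure.toMeasure_map, pushPM, ProbabilityMeasure.toMeasure_map,
        Measure.map_apply hgm hA, Measure.map_apply hrotm (hgm hA)]
    have : ((pushPM hgm (pushPM hrotm Q) : ProbabilityMeasure W) : Measure W) A
        = (Pr' : Measure W) A := by
      rw [heval, hgA]
      exact hQA
    have hcoe1 := ProbabilityMeasure.ennreal_coeFn_eq_coeFn_toMeasure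
      (pushPM hgm (pushPM hrotm Q)) A
    have hcoe2 := ProbabilityMeasure.ennreal_coeFn_eq_coeFn_toMeasure Pr' A
    apply ENNReal.coe_injective
    rw [hcoe1, hcoe2, this]
  · -- Pr'' B = (1 - Pr' A) * condProb Pr B (C \ A)
    have hYm : MeasurableSet (Prod.fst ⁻¹' P ∩ (fun p : W × W × W × S1 => p.2.2.2) ⁻¹' E) :=
      (measurable_fst hPm).inter (measurable_snd.snd.snd hEm)
    have hNsub : symmDiff (g ⁻¹' B) (Prod.fst ⁻¹' P ∩ (fun p : W × W × W × S1 => p.2.2.2) ⁻¹' E)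
        ⊆ ((univ : Set W) ×ˢ Bᶜ ×ˢ (univ : Set W) ×ˢ (univ : Set S1))
          ∪ (B ×ˢ (univ : Set W) ×ˢ Rᶜ ×ˢ Eᶜ) := by
      rintro ⟨w, vb, vr, t⟩ hp
      rw [Set.mem_symmDiff] at hp
      simp only [mem_preimage, mem_inter_iff, mem_union, mem_prod, mem_univ, true_and,
        and_true, mem_compl_iff, hgdef] at hp ⊢
      by_cases h1' : w ∈ P
      · by_cases h2' : t ∈ E
        · by_cases h3' : vb ∈ B
          · simp [h1', h2', h3'] at hp
          · exact Or.inl h3'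
        · by_cases h4' : vr ∈ R
          · have hvrB : vr ∉ B := h4'.2
            simp [h1', h2', h4', hvrB] at hp
          · simp [h1', h2', h4'] at hp
            exact Or.inr ⟨hp, h4', h2'⟩
      · simp [h1'] at hp
        exact absurd (hBP hp) h1'
    have hNnull : Pm (symmDiff (g ⁻¹' B) (Prod.fst ⁻¹' P
        ∩ (fun p : W × W × W × S1 => p.2.2.2) ⁻¹' E)) = 0 := by
      refine measure_mono_null hNsub ?_
      have hN1 : Pm ((univ : Set W) ×ˢ Bᶜ ×ˢ (univ : Set W) ×ˢ (univ : Set S1)) = 0 := by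
        rw [hprod, hνBc, zero_mul, mul_zero]
      have hN2 : Pm (B ×ˢ (univ : Set W) ×ˢ Rᶜ ×ˢ Eᶜ) = 0 := by
        by_cases hR0 : (Pr : Measure W) R = 0
        · rw [hprod, hEcvol0 hR0, mul_zero, mul_zero, mul_zero]
        · rw [hprod, hνRap hR0, inter_compl_self, measure_empty, mul_zero, zero_mul,
            mul_zero, mul_zero]
      exact le_antisymm ((measure_union_le _ _).trans (by rw [hN1, hN2, add_zero]))
        (zero_le')
    have hNm : MeasurableSet (symmDiff (g ⁻¹' B) (Prod.fst ⁻¹' P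
        ∩ (fun p : W × W × W × S1 => p.2.2.2) ⁻¹' E)) :=
      MeasurableSet.symmDiff (hgm hB) hYm
    have heval : ((pushPM hgm (pushPM hrotm Q) : ProbabilityMeasure W) : Measure W) B
        = (Q : Measure (W × W × W × S1)) (rot ⁻¹' (g ⁻¹' B)) := by
      rw [pushPM, ProbabilityMeasure.toMeasure_map, pushPM, ProbabilityMeasure.toMeasure_map,
        Measure.map_apply hgm hB, Measure.map_apply hrotm (hgm hB)]
    have hrotnull : (Q : Measure (W × W × W × S1)) (rot ⁻¹' (symmDiff (g ⁻¹' B)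
        (Prod.fst ⁻¹' P ∩ (fun p : W × W × W × S1 => p.2.2.2) ⁻¹' E))) = 0 := by
      refine hQnull Q hQU _ (hrotm hNm) ?_
      rw [hrotpres.measure_preimage hNm.nullMeasurableSet]
      exact hNnull
    have hsymm : (Q : Measure (W × W × W × S1)) (rot ⁻¹' (g ⁻¹' B))
        = (Q : Measure (W × W × W × S1)) (rot ⁻¹' (Prod.fst ⁻¹' P
          ∩ (fun p : W × W × W × S1 => p.2.2.2) ⁻¹' E)) := by
      apply measure_congr
      apply (measure_symmDiff_eq_zero_iff (μ := (Q : Measure (W × W × W × S1)))).mp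
      rw [← Set.preimage_symmDiff]
      exact hrotnull
    have hEc : MeasurableSet ((· + crot) ⁻¹' E) := (measurable_add_const crot) hEm
    have hrotpre2 : rot ⁻¹' (Prod.fst ⁻¹' P ∩ (fun p : W × W × W × S1 => p.2.2.2) ⁻¹' E)
        = Prod.fst ⁻¹' P ∩ (fun p : W × W × W × S1 => p.2.2.2) ⁻¹' ((· + crot) ⁻¹' E) := rfl
    have hQval : (Q : Measure (W × W × W × S1)) (rot ⁻¹' (Prod.fst ⁻¹' P
        ∩ (fun p : W × W × W × S1 => p.2.2.2) ⁻¹' E)) = m ((· + crot) ⁻¹' E) := by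
      rw [hrotpre2]
      exact (hmapp _ hEc).symm
    have hA'fin : (Pr' : Measure W) A ≠ ∞ := measure_ne_top _ _
    have hA'coe : (Pr' : Measure W) A = ((Pr' A : ℝ≥0) : ℝ≥0∞) :=
      (ProbabilityMeasure.ennreal_coeFn_eq_coeFn_toMeasure Pr' A).symm
    have hmA : m univ = ((1 - Pr' A : ℝ≥0) : ℝ≥0∞) := by
      have h' : m univ + (Pr' : Measure W) A = 1 := by
        rw [add_comm]; exact hmuniv
      have := ENNReal.eq_sub_of_add_eq hA'fin h'
      rw [this, hA'coe, ENNReal.coe_sub, ENNReal.coe_one]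
    have hfinal : m ((· + crot) ⁻¹' E) = ((1 - Pr' A : ℝ≥0) : ℝ≥0∞) * ((b₀ : ℝ≥0) : ℝ≥0∞) := by
      calc m ((· + crot) ⁻¹' E) = ENNReal.ofReal (G x₀) := by
            rw [hcrotdef]; exact hfinfG x₀
      _ = ENNReal.ofReal Tr := by rw [hx₀]
      _ = volume E * m univ := by rw [hTrdef, ENNReal.ofReal_toReal hTfin]
      _ = ((b₀ : ℝ≥0) : ℝ≥0∞) * m univ := by rw [hEvol]
      _ = ((b₀ : ℝ≥0) : ℝ≥0∞) * ((1 - Pr' A : ℝ≥0) : ℝ≥0∞) := by rw [hmA]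
      _ = ((1 - Pr' A : ℝ≥0) : ℝ≥0∞) * ((b₀ : ℝ≥0) : ℝ≥0∞) := mul_comm _ _
    have hcond : condProb Pr B P = b₀ := by
      rw [condProb, inter_eq_left.mpr hBP]
    apply ENNReal.coe_injective
    rw [ProbabilityMeasure.ennreal_coeFn_eq_coeFn_toMeasure, heval, hsymm, hQval, hfinal,
      ENNReal.coe_mul, hcond]
end
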